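/- arXiv:math/0309182 — 4 statements merged into one kernel-verified Lean document; each statement's English description precedes it below -/
import Mathlib

section
/- Let X be a finite partially ordered set, L a Markov generator on X, A ⊆ X, and ψ : X → ℝ such that: (i) ψ(x) > 0 for x ∉ A and ψ(x) = 0 for x ∈ A; (ii) ψ is decreasing on A^c (x ≤ y with x,y ∉ A implies ψ(y) ≤ ψ(x)); (iii) x ↦ (Lψ)(x)/ψ(x) is increasing on A^c; (iv) the Markov generator L_ψ on A^c, with off-diagonal rates L_ψ(x,y) = L(x,y)·ψ(y)/ψ(x) for x ≠ y in A^c and diagonal entries making the rows sum to zero, is monotone for the order restricted to A^c. Then for every t ≥ 0 the function x ↦ P_x(τ_A > t)/ψ(x) is increasing on A^c, i.e. for x ≤ y with x,y ∉ A one has P_x(τ_A > t)/ψ(x) ≤ P_y(τ_A > t)/ψ(y). -/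
set_option maxHeartbeats 2000000

open scoped Classical
noncomputable section
/-- The stopped generator `L̄`: the rows indexed by `A` are replaced by zero rows. -/
def stoppedGen {X : Type*} (L : Matrix X X ℝ) (A : Set X) : Matrix X X ℝ :=
  Matrix.of fun x y => if x ∈ A then 0 else L x y

/-- The survival probability `P_x(τ_A > t) = (e^{t L̄} 1_{A^c})(x)`. -/
def survProb {X : Type*} [Fintype X] [DecidableEq X]
    (L : Matrix X X ℝ) (A : Set X) (t : ℝ) (x : X) : ℝ :=
  (NormedSpace.exp (t • stoppedGen L A)).mulVec (fun y => if y ∈ A then 0 else 1) x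

/-- A generator (matrix) is monotone if its semigroup `e^{tL}` sends increasing
functions to increasing functions, for every `t ≥ 0`. -/
def IsMonotoneGen {X : Type*} [Fintype X] [DecidableEq X] [PartialOrder X]
    (L : Matrix X X ℝ) : Prop :=
  ∀ t : ℝ, 0 ≤ t → ∀ f : X → ℝ, Monotone f →
    Monotone ((NormedSpace.exp (t • L)).mulVec f)

/-- The transformed generator `L_ψ` on `A^c`: off-diagonal rates
`L_ψ(x,y) = L(x,y) ψ(y)/ψ(x)`, diagonal entries making rows sum to zero. -/
def psiGen {X : Type*} [Fintype X] (L : Matrix X X ℝ) (A : Set X) (ψ : X → ℝ) :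
    Matrix {x : X // x ∉ A} {x : X // x ∉ A} ℝ :=
  Matrix.of fun x y =>
    if x = y then -(∑ z : {x : X // x ∉ A}, if z = x then 0 else L x.1 z.1 * ψ z.1 / ψ x.1)
    else L x.1 y.1 * ψ y.1 / ψ x.1


open NormedSpace Filter Topology

section BanachAlgebra

variable {𝔸 : Type*} [NormedRing 𝔸] [NormOneClass 𝔸] [NormedAlgebra ℝ 𝔸] [CompleteSpace 𝔸]

theorem my_exp_eq (x : 𝔸) : exp x = ∑' n : ℕ, ((Nat.factorial n : ℝ))⁻¹ • x ^ n := by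
  rw [exp_eq_tsum ℝ]

theorem my_norm_exp_le (x : 𝔸) : ‖exp x‖ ≤ Real.exp ‖x‖ := by
  rw [my_exp_eq]
  refine (norm_tsum_le_tsum_norm (norm_expSeries_summable' x)).trans ?_
  rw [Real.exp_eq_exp_ℝ, my_exp_eq]
  refine Summable.tsum_le_tsum ?_ (norm_expSeries_summable' x) (expSeries_summable' (𝕂 := ℝ) ‖x‖)
  intro n
  rw [norm_smul, smul_eq_mul, norm_inv, Real.norm_natCast]
  gcongr
  exact norm_pow_le x n

theorem my_norm_exp_sub_le (x : 𝔸) : ‖exp x - 1 - x‖ ≤ ‖x‖ ^ 2 * Real.exp ‖x‖ := by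
  have hs := expSeries_summable' (𝕂 := ℝ) x
  have hs1 : Summable fun n : ℕ => ((Nat.factorial (n+1) : ℝ))⁻¹ • x ^ (n + 1) :=
    (summable_nat_add_iff 1).2 hs
  have key : exp x - 1 - x = ∑' n : ℕ, ((Nat.factorial (n+2) : ℝ))⁻¹ • x ^ (n + 2) := by
    rw [my_exp_eq, hs.tsum_eq_zero_add, hs1.tsum_eq_zero_add]
    simp [Nat.factorial]

  rw [key]
  have hnorm : ∀ n : ℕ, ‖((Nat.factorial (n+2) : ℝ))⁻¹ • x ^ (n + 2)‖
      ≤ ‖x‖ ^ 2 * (((Nat.factorial n : ℝ))⁻¹ * ‖x‖ ^ n) := by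
    intro n
    rw [norm_smul, norm_inv, Real.norm_natCast]
    have h1 : ‖x ^ (n + 2)‖ ≤ ‖x‖ ^ 2 * ‖x‖ ^ n := by
      calc ‖x ^ (n + 2)‖ ≤ ‖x‖ ^ (n + 2) := norm_pow_le x (n + 2)
        _ = ‖x‖ ^ 2 * ‖x‖ ^ n := by ring
    have h2 : ((Nat.factorial (n+2) : ℝ))⁻¹ ≤ ((Nat.factorial n : ℝ))⁻¹ := by
      apply inv_anti₀
      · exact_mod_cast Nat.factorial_pos n
      · exact_mod_cast Nat.factorial_le (by omega)
    calc ((Nat.factorial (n+2) : ℝ))⁻¹ * ‖x ^ (n + 2)‖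
        ≤ ((Nat.factorial n : ℝ))⁻¹ * (‖x‖ ^ 2 * ‖x‖ ^ n) :=
          mul_le_mul h2 h1 (norm_nonneg _) (by positivity)
      _ = ‖x‖ ^ 2 * (((Nat.factorial n : ℝ))⁻¹ * ‖x‖ ^ n) := by ring
  have hsum2 : Summable fun n : ℕ => ‖x‖ ^ 2 * (((Nat.factorial n : ℝ))⁻¹ * ‖x‖ ^ n) := by
    apply Summable.mul_left
    simpa [smul_eq_mul] using expSeries_summable' (𝕂 := ℝ) ‖x‖
  have hsumA : Summable fun n : ℕ => ‖((Nat.factorial (n+2) : ℝ))⁻¹ • x ^ (n + 2)‖ :=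
    Summable.of_nonneg_of_le (fun n => norm_nonneg _) hnorm hsum2
  calc ‖∑' n : ℕ, ((Nat.factorial (n+2) : ℝ))⁻¹ • x ^ (n + 2)‖
      ≤ ∑' n : ℕ, ‖((Nat.factorial (n+2) : ℝ))⁻¹ • x ^ (n + 2)‖ :=
        norm_tsum_le_tsum_norm hsumA
    _ ≤ ∑' n : ℕ, ‖x‖ ^ 2 * (((Nat.factorial n : ℝ))⁻¹ * ‖x‖ ^ n) :=
        Summable.tsum_le_tsum hnorm hsumA hsum2
    _ = ‖x‖ ^ 2 * ∑' n : ℕ, (((Nat.factorial n : ℝ))⁻¹ * ‖x‖ ^ n) := tsum_mul_left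
    _ = ‖x‖ ^ 2 * Real.exp ‖x‖ := by
        rw [Real.exp_eq_exp_ℝ, my_exp_eq]
        simp [smul_eq_mul]

theorem my_pow_sub_pow_norm (P Q : 𝔸) (R : ℝ) (hP : ‖P‖ ≤ R) (hQ : ‖Q‖ ≤ R) (hR : 1 ≤ R) :
    ∀ n : ℕ, ‖P ^ n - Q ^ n‖ ≤ n * R ^ n * ‖P - Q‖ := by
  intro n
  induction n with
  | zero => simp
  | succ n ih =>
    have hR0 : 0 ≤ R := le_trans zero_le_one hR
    have key : P ^ (n + 1) - Q ^ (n + 1) = P ^ n * (P - Q) + (P ^ n - Q ^ n) * Q := by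
      rw [pow_succ, pow_succ]; noncomm_ring
    rw [key]
    calc ‖P ^ n * (P - Q) + (P ^ n - Q ^ n) * Q‖
        ≤ ‖P ^ n * (P - Q)‖ + ‖(P ^ n - Q ^ n) * Q‖ := norm_add_le _ _
      _ ≤ ‖P ^ n‖ * ‖P - Q‖ + ‖P ^ n - Q ^ n‖ * ‖Q‖ :=
          add_le_add (norm_mul_le _ _) (norm_mul_le _ _)
      _ ≤ R ^ n * ‖P - Q‖ + (n * R ^ n * ‖P - Q‖) * R := by
          gcongr
          exact (norm_pow_le P n).trans (pow_le_pow_left₀ (norm_nonneg _) hP n)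
      _ ≤ (↑(n + 1) : ℝ) * R ^ (n + 1) * ‖P - Q‖ := by
          have h1 : R ^ n ≤ R ^ (n + 1) := pow_le_pow_right₀ hR (by omega)
          have h2 : (0:ℝ) ≤ ‖P - Q‖ := norm_nonneg _
          have h3 : (0:ℝ) ≤ R ^ n := pow_nonneg hR0 n
          have h5 : R ^ n * ‖P - Q‖ ≤ R ^ (n+1) * ‖P - Q‖ :=
            mul_le_mul_of_nonneg_right h1 h2
          have h6 : (↑n : ℝ) * R ^ n * ‖P - Q‖ * R = ↑n * R ^ (n+1) * ‖P - Q‖ := by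
            rw [pow_succ]; ring
          push_cast
          linarith

/-- quadratic error bound for one Trotter step -/
theorem my_trotter_step (M D : 𝔸) {a : ℝ} (ha : 0 ≤ a) (ha1 : a ≤ 1) :
    ‖exp (a • M) * exp (a • D) - exp (a • (M + D))‖ ≤
      (‖M‖^2 * Real.exp (‖M‖ + ‖D‖) * Real.exp (‖M‖ + ‖D‖)
        + ‖M‖ * ‖D‖^2 * Real.exp (‖M‖ + ‖D‖) + ‖M‖ * ‖D‖
        + ‖D‖^2 * Real.exp (‖M‖ + ‖D‖)
        + (‖M‖ + ‖D‖)^2 * Real.exp (‖M‖ + ‖D‖)) * a ^ 2 := by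
  set m := ‖M‖ with hm
  set d := ‖D‖ with hd
  have hm0 : 0 ≤ m := norm_nonneg _
  have hd0 : 0 ≤ d := norm_nonneg _
  set K := m + d with hK
  set E := Real.exp K with hE
  have hE1 : 1 ≤ E := Real.one_le_exp (by positivity)
  set u := a • M with hu
  set v := a • D with hv
  set w := a • (M + D) with hw
  set p := exp u with hp
  set q := exp v with hq
  set r := exp w with hr
  have hnu : ‖u‖ = a * m := by rw [hu, norm_smul, Real.norm_of_nonneg ha]
  have hnv : ‖v‖ = a * d := by rw [hv, norm_smul, Real.norm_of_nonneg ha]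
  have hnw : ‖w‖ ≤ a * K := by
    rw [hw, norm_smul, Real.norm_of_nonneg ha]
    have := norm_add_le M D
    nlinarith
  have huK : ‖u‖ ≤ K := by rw [hnu]; nlinarith
  have hvK : ‖v‖ ≤ K := by rw [hnv]; nlinarith
  have hwK : ‖w‖ ≤ K := le_trans hnw (by nlinarith)
  have heu : Real.exp ‖u‖ ≤ E := Real.exp_le_exp.2 huK
  have hev : Real.exp ‖v‖ ≤ E := Real.exp_le_exp.2 hvK
  have hew : Real.exp ‖w‖ ≤ E := Real.exp_le_exp.2 hwK
  rw [hnu] at heu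
  rw [hnv] at hev
  have hqE : ‖q‖ ≤ E := (my_norm_exp_le v).trans (by rw [hnv] at *; exact hev)
  have h3 : ‖q - 1 - v‖ ≤ (a*d)^2 * E := by
    refine (my_norm_exp_sub_le v).trans ?_
    rw [hnv]
    nlinarith [Real.exp_pos (a*d), sq_nonneg (a*d)]
  have hq1 : ‖q - 1‖ ≤ (a*d)^2 * E + a * d := by
    have hqd : q - 1 = (q - 1 - v) + v := by abel
    rw [hqd]
    refine (norm_add_le _ _).trans ?_
    rw [hnv]; linarith
  have hkey : p * q - r = (p - 1 - u) * q + u * (q - 1) + (q - 1 - v) - (r - 1 - w) := by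
    have hwuv : w = u + v := by rw [hw, hu, hv, smul_add]
    rw [hwuv]; noncomm_ring
  rw [hkey]
  have hp1 : ‖p - 1 - u‖ ≤ (a*m)^2 * E := by
    refine (my_norm_exp_sub_le u).trans ?_
    rw [hnu]
    nlinarith [Real.exp_pos (a*m), sq_nonneg (a*m)]
  have t1 : ‖(p - 1 - u) * q‖ ≤ a^2 * (m^2 * E * E) := by
    refine (norm_mul_le _ _).trans ?_
    calc ‖p - 1 - u‖ * ‖q‖ ≤ ((a*m)^2 * E) * E :=
          mul_le_mul hp1 hqE (norm_nonneg _) (by positivity)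
      _ ≤ a^2 * (m^2 * E * E) := by nlinarith [sq_nonneg (a*m)]
  have t2 : ‖u * (q - 1)‖ ≤ a^2 * (m * d^2 * E + m * d) := by
    refine (norm_mul_le _ _).trans ?_
    calc ‖u‖ * ‖q - 1‖ ≤ (a*m) * ((a*d)^2 * E + a * d) := by
          rw [hnu]
          exact mul_le_mul le_rfl hq1 (norm_nonneg _) (by positivity)
      _ ≤ a^2 * (m * d^2 * E + m * d) := by
          have haa : a^3 ≤ a^2 := by nlinarith
          have hf : (0:ℝ) ≤ m * d^2 * E := by positivity
          nlinarith [mul_le_mul_of_nonneg_right haa hf]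
  have t3 : ‖q - 1 - v‖ ≤ a^2 * (d^2 * E) := by
    refine h3.trans ?_
    nlinarith [sq_nonneg d]
  have t4 : ‖r - 1 - w‖ ≤ a^2 * (K^2 * E) := by
    refine (my_norm_exp_sub_le w).trans ?_
    have h0 : 0 ≤ ‖w‖ := norm_nonneg _
    have h1 : ‖w‖^2 ≤ (a*K)^2 := by nlinarith
    have h2 : Real.exp ‖w‖ ≤ E := hew
    have hK0 : (0:ℝ) ≤ K := by positivity
    nlinarith [Real.exp_pos ‖w‖, sq_nonneg (a*K)]
  calc ‖(p - 1 - u) * q + u * (q - 1) + (q - 1 - v) - (r - 1 - w)‖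
      ≤ ‖(p - 1 - u) * q + u * (q - 1) + (q - 1 - v)‖ + ‖r - 1 - w‖ := norm_sub_le _ _
    _ ≤ ‖(p - 1 - u) * q‖ + ‖u * (q - 1)‖ + ‖q - 1 - v‖ + ‖r - 1 - w‖ := by
        have := norm_add_le ((p - 1 - u) * q + u * (q - 1)) (q - 1 - v)
        have := norm_add_le ((p - 1 - u) * q) (u * (q - 1))
        linarith
    _ ≤ _ := by nlinarith [t1, t2, t3, t4]



theorem my_trotter (M D : 𝔸) {t : ℝ} (ht : 0 ≤ t) :
    Tendsto (fun n : ℕ => (exp ((t / n) • M) * exp ((t / n) • D)) ^ n) atTop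
      (𝓝 (exp (t • (M + D)))) := by
  set K := ‖M‖ + ‖D‖ with hKdef
  have hK0 : 0 ≤ K := by positivity
  set C := ‖M‖^2 * Real.exp K * Real.exp K + ‖M‖ * ‖D‖^2 * Real.exp K + ‖M‖ * ‖D‖
        + ‖D‖^2 * Real.exp K + K^2 * Real.exp K with hCdef
  have hC0 : 0 ≤ C := by positivity
  rw [tendsto_iff_norm_sub_tendsto_zero]
  refine tendsto_of_tendsto_of_tendsto_of_le_of_le' (g := fun _ : ℕ => (0:ℝ))
    (h := fun n : ℕ => (Real.exp (t * K) * C * t ^ 2) / n)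
    tendsto_const_nhds (tendsto_const_div_atTop_nhds_zero_nat _)
    (Eventually.of_forall fun n => norm_nonneg _) ?_
  filter_upwards [eventually_ge_atTop 1, eventually_ge_atTop (Nat.ceil t)] with n hn1 hn2
  have hn0 : (0:ℝ) < n := by exact_mod_cast hn1
  have hnt : t ≤ n := le_trans (Nat.le_ceil t) (by exact_mod_cast hn2)
  set a := t / n with hadef
  have ha : 0 ≤ a := div_nonneg ht hn0.le
  have ha1 : a ≤ 1 := by rw [hadef, div_le_one hn0]; exact hnt
  have hna : (n : ℝ) * a = t := by
    rw [hadef]; field_simp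
  have hQeq : exp (t • (M + D)) = exp (a • (M + D)) ^ n := by
    letI : NormedAlgebra ℚ 𝔸 := NormedAlgebra.restrictScalars ℚ ℝ 𝔸
    rw [← exp_nsmul, ← hna, ← smul_assoc, nsmul_eq_mul]
  set P := exp (a • M) * exp (a • D) with hPdef
  set Q := exp (a • (M + D)) with hQdef
  have hnormM : ‖a • M‖ = a * ‖M‖ := by rw [norm_smul, Real.norm_of_nonneg ha]
  have hnormD : ‖a • D‖ = a * ‖D‖ := by rw [norm_smul, Real.norm_of_nonneg ha]
  have hP : ‖P‖ ≤ Real.exp (a * K) := by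
    refine (norm_mul_le _ _).trans ?_
    calc ‖exp (a • M)‖ * ‖exp (a • D)‖
        ≤ Real.exp ‖a • M‖ * Real.exp ‖a • D‖ :=
          mul_le_mul (my_norm_exp_le _) (my_norm_exp_le _) (norm_nonneg _)
            (Real.exp_pos _).le
      _ = Real.exp (a * K) := by
          rw [← Real.exp_add, hnormM, hnormD, hKdef]; ring_nf
  have hQ : ‖Q‖ ≤ Real.exp (a * K) := by
    refine (my_norm_exp_le _).trans (Real.exp_le_exp.2 ?_)
    rw [norm_smul, Real.norm_of_nonneg ha, hKdef]
    have := norm_add_le M D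
    nlinarith
  have hR1 : 1 ≤ Real.exp (a * K) := Real.one_le_exp (by positivity)
  have hPQ : ‖P - Q‖ ≤ C * a ^ 2 := my_trotter_step M D ha ha1
  have hRn : Real.exp (a * K) ^ n = Real.exp (t * K) := by
    rw [← Real.exp_nat_mul, ← mul_assoc, hna]
  calc ‖P ^ n - exp (t • (M + D))‖ = ‖P ^ n - Q ^ n‖ := by rw [hQeq]
    _ ≤ n * Real.exp (a * K) ^ n * ‖P - Q‖ :=
        my_pow_sub_pow_norm P Q _ hP hQ hR1 n
    _ ≤ n * Real.exp (t * K) * (C * a ^ 2) := by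
        rw [hRn]
        exact mul_le_mul_of_nonneg_left hPQ (by positivity)
    _ = Real.exp (t * K) * C * t ^ 2 / n := by
        rw [hadef]
        field_simp


end BanachAlgebra

section MatrixLemmas

variable {n : Type*} [Fintype n] [DecidableEq n] [Nonempty n]

attribute [local instance] Matrix.linftyOpNormedRing Matrix.linftyOpNormedAlgebra

theorem my_exp_smul_one {𝔸 : Type*} [NormedRing 𝔸] [NormedAlgebra ℝ 𝔸] [CompleteSpace 𝔸] (c : ℝ) :
    exp (c • (1:𝔸)) = Real.exp c • (1:𝔸) := by
  have h1 : c • (1:𝔸) = algebraMap ℝ 𝔸 c := (Algebra.algebraMap_eq_smul_one c).symm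
  rw [h1, ← algebraMap_exp_comm, ← Real.exp_eq_exp_ℝ, Algebra.algebraMap_eq_smul_one]

/-- entries of a tsum commute -/
theorem my_exp_entry (N : Matrix n n ℝ) (i j : n) :
    exp N i j = ∑' k : ℕ, ((Nat.factorial k : ℝ))⁻¹ * ((N ^ k) i j) := by
  let φ : Matrix n n ℝ →ₗ[ℝ] ℝ :=
    { toFun := fun G => G i j, map_add' := fun _ _ => rfl, map_smul' := fun _ _ => rfl }
  have hφ : Continuous φ := LinearMap.continuous_of_finiteDimensional φ
  have hsum := (expSeries_summable' (𝕂 := ℝ) N).hasSum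
  have h2 := (hsum.map φ.toAddMonoidHom hφ).tsum_eq
  rw [exp_eq_tsum ℝ]
  exact h2.symm

theorem my_pow_entry_nonneg (N : Matrix n n ℝ) (hN : ∀ i j, 0 ≤ N i j) (k : ℕ) :
    ∀ i j, 0 ≤ (N ^ k) i j := by
  induction k with
  | zero => intro i j; by_cases h : i = j <;> simp [pow_zero, Matrix.one_apply, h]
  | succ k ih =>
    intro i j
    rw [pow_succ, Matrix.mul_apply]
    exact Finset.sum_nonneg fun z _ => mul_nonneg (ih i z) (hN z j)

theorem my_exp_entry_nonneg (N : Matrix n n ℝ) (hN : ∀ i j, 0 ≤ N i j) (i j : n) :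
    0 ≤ exp N i j := by
  rw [my_exp_entry]
  refine tsum_nonneg fun k => mul_nonneg (by positivity) (my_pow_entry_nonneg N hN k i j)

/-- exp of a generator-like matrix (nonnegative off-diagonal entries) has
nonnegative entries. -/
theorem my_exp_gen_entry_nonneg (N : Matrix n n ℝ) (hN : ∀ i j, i ≠ j → 0 ≤ N i j) (i j : n) :
    0 ≤ exp N i j := by
  set c : ℝ := ∑ k : n, |N k k| with hc
  have hc0 : ∀ k, -N k k ≤ c := by
    intro k
    calc -N k k ≤ |N k k| := neg_le_abs _
      _ ≤ c := Finset.single_le_sum (fun z _ => abs_nonneg (N z z)) (Finset.mem_univ k)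
  have hsplit : N = (N + c • (1 : Matrix n n ℝ)) + (-c) • (1 : Matrix n n ℝ) := by
    rw [add_assoc, ← add_smul]
    simp
  have hcomm : Commute (N + c • (1 : Matrix n n ℝ)) ((-c) • (1 : Matrix n n ℝ)) := by
    refine Commute.smul_right ?_ _
    exact Commute.one_right _
  have hexp : exp N =
      exp (N + c • (1 : Matrix n n ℝ)) * (Real.exp (-c) • (1 : Matrix n n ℝ)) := by
    conv_lhs => rw [hsplit]
    rw [Matrix.exp_add_of_commute _ _ hcomm]
    congr 1
    exact my_exp_smul_one (-c)
  rw [hexp]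
  have hNc : ∀ i j, 0 ≤ (N + c • (1 : Matrix n n ℝ)) i j := by
    intro i j
    by_cases h : i = j
    · subst h
      simp only [Matrix.add_apply, Matrix.smul_apply, Matrix.one_apply_eq, smul_eq_mul, mul_one]
      linarith [hc0 i]
    · simp only [Matrix.add_apply, Matrix.smul_apply, Matrix.one_apply_ne h, smul_eq_mul,
        mul_zero, add_zero]
      exact hN i j h
  have h1 : (exp (N + c • (1 : Matrix n n ℝ)) * (Real.exp (-c) • (1 : Matrix n n ℝ))) i j
      = Real.exp (-c) * exp (N + c • (1 : Matrix n n ℝ)) i j := by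
    rw [Matrix.mul_smul, Matrix.mul_one, Matrix.smul_apply, smul_eq_mul]
  rw [h1]
  exact mul_nonneg (Real.exp_pos _).le (my_exp_entry_nonneg _ hNc i j)

/-- mulVec entry of exp as a series. -/
theorem my_exp_mulVec_entry (N : Matrix n n ℝ) (v : n → ℝ) (i : n) :
    (exp N).mulVec v i = ∑' k : ℕ, ((Nat.factorial k : ℝ))⁻¹ * ((N ^ k).mulVec v i) := by
  let φ : Matrix n n ℝ →ₗ[ℝ] ℝ :=
    { toFun := fun G => G.mulVec v i,
      map_add' := fun G H => by simp [Matrix.add_mulVec, Pi.add_apply],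
      map_smul' := fun r G => by simp [Matrix.smul_mulVec, Pi.smul_apply] }
  have hφ : Continuous φ := LinearMap.continuous_of_finiteDimensional φ
  have hsum := (expSeries_summable' (𝕂 := ℝ) N).hasSum
  have h2 := (hsum.map φ.toAddMonoidHom hφ).tsum_eq
  have h3 : ∀ k : ℕ, φ (((Nat.factorial k : ℝ))⁻¹ • N ^ k)
      = ((Nat.factorial k : ℝ))⁻¹ * ((N ^ k).mulVec v i) := by
    intro k
    rw [map_smul, smul_eq_mul]
    rfl
  have h0 : exp N = ∑' k : ℕ, ((Nat.factorial k : ℝ))⁻¹ • N ^ k := by rw [exp_eq_tsum ℝ]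
  rw [h0]
  exact h2.symm.trans (tsum_congr h3)

/-- entry convergence from matrix convergence. -/
theorem my_tendsto_mulVec {f : ℕ → Matrix n n ℝ} {G : Matrix n n ℝ} (v : n → ℝ) (i : n)
    (h : Tendsto f atTop (𝓝 G)) :
    Tendsto (fun k => (f k).mulVec v i) atTop (𝓝 (G.mulVec v i)) := by
  let φ : Matrix n n ℝ →ₗ[ℝ] ℝ :=
    { toFun := fun H => H.mulVec v i,
      map_add' := fun G H => by simp [Matrix.add_mulVec, Pi.add_apply],
      map_smul' := fun r G => by simp [Matrix.smul_mulVec, Pi.smul_apply] }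
  have hφ : Continuous φ := LinearMap.continuous_of_finiteDimensional φ
  exact (hφ.tendsto G).comp h

end MatrixLemmas


theorem my_sum_compl {X : Type*} [Fintype X] (A : Set X) (f : X → ℝ)
    (hf : ∀ z ∈ A, f z = 0) : ∑ z : X, f z = ∑ z : {x : X // x ∉ A}, f z.1 := by
  rw [← Finset.sum_subtype (Finset.univ.filter (fun z => z ∉ A)) (fun z => by simp) f]
  refine (Finset.sum_filter_of_ne ?_).symm
  intro z _ hz
  exact fun hzA => hz (hf z hzA)

theorem my_exp_restrict {X : Type*} [Fintype X] [DecidableEq X] (A : Set X)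
    (G : Matrix X X ℝ) (hG : ∀ z ∈ A, ∀ y, G z y = 0)
    (f : {x : X // x ∉ A} → ℝ) (z : {x : X // x ∉ A}) :
    (exp G).mulVec (fun w => if h : w ∈ A then (0:ℝ) else f ⟨w, h⟩) z.1
      = (exp (Matrix.of fun a b : {x : X // x ∉ A} => G a.1 b.1)).mulVec f z := by
  haveI : Nonempty X := ⟨z.1⟩
  haveI : Nonempty {x : X // x ∉ A} := ⟨z⟩
  set E : ({x : X // x ∉ A} → ℝ) → (X → ℝ) :=
    fun g w => if h : w ∈ A then (0:ℝ) else g ⟨w, h⟩ with hE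
  set GS : Matrix {x : X // x ∉ A} {x : X // x ∉ A} ℝ :=
    Matrix.of fun a b : {x : X // x ∉ A} => G a.1 b.1 with hGS
  have core : ∀ g, G.mulVec (E g) = E (GS.mulVec g) := by
    intro g; funext w
    by_cases hw : w ∈ A
    · have h1 : G.mulVec (E g) w = ∑ y : X, G w y * E g y := rfl
      rw [h1]
      simp [hE, dif_pos hw, hG w hw]
    · have h1 : G.mulVec (E g) w = ∑ y : X, G w y * E g y := rfl
      have h2 : E (GS.mulVec g) w = GS.mulVec g ⟨w, hw⟩ := dif_neg hw
      rw [h1, h2]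
      have h3 : ∑ y : X, G w y * E g y
          = ∑ y : {x : X // x ∉ A}, G w y.1 * E g y.1 := by
        refine my_sum_compl A _ ?_
        intro u hu
        simp [hE, dif_pos hu]
      rw [h3]
      refine Finset.sum_congr rfl fun u _ => ?_
      have h4 : E g u.1 = g u := by
        rw [hE]
        simp only
        rw [dif_neg u.2]
      rw [h4]
      rfl
  have hpow : ∀ k : ℕ, ∀ g, (G ^ k).mulVec (E g) = E ((GS ^ k).mulVec g) := by
    intro k
    induction k with
    | zero => intro g; simp [Matrix.one_mulVec]
    | succ k ih =>
      intro g
      rw [pow_succ', pow_succ', ← Matrix.mulVec_mulVec, ← Matrix.mulVec_mulVec, ih, core]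
  rw [my_exp_mulVec_entry G _ z.1, my_exp_mulVec_entry GS f z]
  refine tsum_congr fun k => ?_
  congr 1
  have h5 := congrFun (hpow k f) z.1
  have h6 : E ((GS ^ k).mulVec f) z.1 = (GS ^ k).mulVec f z := by
    rw [hE]; simp only; rw [dif_neg z.2]
  rw [← h6, ← h5]


section PsiGenEntries

variable {X : Type*} [Fintype X]

theorem my_psiGen_offdiag (L : Matrix X X ℝ) (A : Set X) (ψ : X → ℝ)
    {a b : {x : X // x ∉ A}} (hab : a ≠ b) :
    psiGen L A ψ a b = L a.1 b.1 * ψ b.1 / ψ a.1 := by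
  simp [psiGen, hab]

theorem my_psiGen_diag (L : Matrix X X ℝ) (A : Set X) (ψ : X → ℝ)
    (hψ_pos : ∀ x ∉ A, 0 < ψ x) (hψ_A : ∀ x ∈ A, ψ x = 0) (a : {x : X // x ∉ A}) :
    psiGen L A ψ a a = L a.1 a.1 - L.mulVec ψ a.1 / ψ a.1 := by
  have hψa : ψ a.1 ≠ 0 := ne_of_gt (hψ_pos a.1 a.2)
  simp only [psiGen, Matrix.of_apply, if_pos rfl]
  have h4 : ∑ z : {x : X // x ∉ A}, (if z = a then 0 else L a.1 z.1 * ψ z.1 / ψ a.1)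
      = (∑ z : {x : X // x ∉ A}, (if z = a then 0 else L a.1 z.1 * ψ z.1)) / ψ a.1 := by
    rw [Finset.sum_div]
    refine Finset.sum_congr rfl fun z _ => ?_
    by_cases h : z = a <;> simp [h]
  have h1 : L.mulVec ψ a.1 = ∑ z : X, L a.1 z * ψ z := rfl
  have h2 : ∑ z : X, L a.1 z * ψ z = ∑ z : {x : X // x ∉ A}, L a.1 z.1 * ψ z.1 :=
    my_sum_compl A _ (fun z hz => by rw [hψ_A z hz, mul_zero])
  have h3 : ∑ z : {x : X // x ∉ A}, L a.1 z.1 * ψ z.1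
      = L a.1 a.1 * ψ a.1
        + ∑ z : {x : X // x ∉ A}, (if z = a then 0 else L a.1 z.1 * ψ z.1) := by
    calc ∑ z : {x : X // x ∉ A}, L a.1 z.1 * ψ z.1
        = ∑ z : {x : X // x ∉ A}, ((if z = a then L a.1 z.1 * ψ z.1 else 0)
            + (if z = a then 0 else L a.1 z.1 * ψ z.1)) := by
          refine Finset.sum_congr rfl fun z _ => ?_
          by_cases h : z = a <;> simp [h]
      _ = (∑ z : {x : X // x ∉ A}, if z = a then L a.1 z.1 * ψ z.1 else 0)
          + ∑ z : {x : X // x ∉ A}, (if z = a then 0 else L a.1 z.1 * ψ z.1) :=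
          Finset.sum_add_distrib
      _ = L a.1 a.1 * ψ a.1
          + ∑ z : {x : X // x ∉ A}, (if z = a then 0 else L a.1 z.1 * ψ z.1) := by
          rw [Finset.sum_ite_eq' Finset.univ a (fun z => L a.1 z.1 * ψ z.1),
            if_pos (Finset.mem_univ a)]
  rw [h4, h1, h2, h3]
  simp only [if_true]
  field_simp
  ring

end PsiGenEntries

/-- **Lemma 2.1 (the monotone method).**  If `ψ > 0` on `A^c`, `ψ = 0` on `A`, `ψ` is
decreasing on `A^c`, `Lψ/ψ` is increasing on `A^c` and the generator `L_ψ` is monotone,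
then `x ↦ P_x(τ_A > t)/ψ(x)` is increasing on `A^c` for every `t ≥ 0`. -/
theorem survival_ratio_increasing
    {X : Type*} [Fintype X] [DecidableEq X] [PartialOrder X]
    (L : Matrix X X ℝ)
    (hL_offdiag : ∀ x y, x ≠ y → 0 ≤ L x y)
    (hL_row : ∀ x, ∑ y, L x y = 0)
    (A : Set X) (ψ : X → ℝ)
    (hψ_pos : ∀ x ∉ A, 0 < ψ x) (hψ_A : ∀ x ∈ A, ψ x = 0)
    (hψ_dec : ∀ x ∉ A, ∀ y ∉ A, x ≤ y → ψ y ≤ ψ x)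
    (hV_inc : ∀ x ∉ A, ∀ y ∉ A, x ≤ y → L.mulVec ψ x / ψ x ≤ L.mulVec ψ y / ψ y)
    (hmono : IsMonotoneGen (psiGen L A ψ)) :
    ∀ t : ℝ, 0 ≤ t → ∀ x ∉ A, ∀ y ∉ A, x ≤ y →
      survProb L A t x / ψ x ≤ survProb L A t y / ψ y := by
  intro t ht x hx y hy hxy
  haveI : Nonempty X := ⟨x⟩
  haveI : Nonempty {x : X // x ∉ A} := ⟨⟨x, hx⟩⟩
  letI : NormedRing (Matrix {x : X // x ∉ A} {x : X // x ∉ A} ℝ) := Matrix.linftyOpNormedRing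
  letI : NormedAlgebra ℝ (Matrix {x : X // x ∉ A} {x : X // x ∉ A} ℝ) :=
    Matrix.linftyOpNormedAlgebra
  set LS : Matrix {x : X // x ∉ A} {x : X // x ∉ A} ℝ :=
    Matrix.of (fun a b => L a.1 b.1) with hLS
  set V : {x : X // x ∉ A} → ℝ := fun a => L.mulVec ψ a.1 / ψ a.1 with hV
  set Dg : Matrix {x : X // x ∉ A} {x : X // x ∉ A} ℝ := Matrix.diagonal V with hDg
  set Mg : Matrix {x : X // x ∉ A} {x : X // x ∉ A} ℝ := psiGen L A ψ with hMg
  set f0 : {x : X // x ∉ A} → ℝ := fun a => (ψ a.1)⁻¹ with hf0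
  have hMD : Mg + Dg = Matrix.of (fun a b : {x : X // x ∉ A} =>
      (ψ a.1)⁻¹ * (L a.1 b.1 * ψ b.1)) := by
    ext a b
    have hψa : ψ a.1 ≠ 0 := ne_of_gt (hψ_pos a.1 a.2)
    by_cases hab : a = b
    · subst hab
      rw [Matrix.add_apply, hMg, my_psiGen_diag L A ψ hψ_pos hψ_A a, hDg,
        Matrix.diagonal_apply_eq, hV, Matrix.of_apply]
      field_simp
      ring
    · rw [Matrix.add_apply, hMg, my_psiGen_offdiag L A ψ hab, hDg,
        Matrix.diagonal_apply_ne _ hab, Matrix.of_apply, add_zero, div_eq_mul_inv]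
      ring
  set U : Matrix {x : X // x ∉ A} {x : X // x ∉ A} ℝ :=
    Matrix.diagonal (fun a => ψ a.1) with hU
  set W : Matrix {x : X // x ∉ A} {x : X // x ∉ A} ℝ :=
    Matrix.diagonal (fun a => (ψ a.1)⁻¹) with hW
  have hψne : ∀ a : {x : X // x ∉ A}, ψ a.1 ≠ 0 := fun a => ne_of_gt (hψ_pos a.1 a.2)
  have hUW : U * W = 1 := by
    rw [hU, hW, Matrix.diagonal_mul_diagonal]
    have : (fun a : {x : X // x ∉ A} => ψ a.1 * (ψ a.1)⁻¹) = fun _ => (1:ℝ) :=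
      funext fun a => mul_inv_cancel₀ (hψne a)
    rw [this, Matrix.diagonal_one]
  have hWU : W * U = 1 := by
    rw [hU, hW, Matrix.diagonal_mul_diagonal]
    have : (fun a : {x : X // x ∉ A} => (ψ a.1)⁻¹ * ψ a.1) = fun _ => (1:ℝ) :=
      funext fun a => inv_mul_cancel₀ (hψne a)
    rw [this, Matrix.diagonal_one]
  have hconj : t • (Mg + Dg) = W * (t • LS) * U := by
    rw [hMD, hU, hW]
    ext a b
    rw [Matrix.mul_diagonal, Matrix.diagonal_mul]
    simp only [Matrix.smul_apply, Matrix.of_apply, smul_eq_mul, hLS]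
    ring
  have hexpconj : exp (t • (Mg + Dg)) = W * exp (t • LS) * U := by
    let u : (Matrix {x : X // x ∉ A} {x : X // x ∉ A} ℝ)ˣ := ⟨U, W, hUW, hWU⟩
    have h1 : t • (Mg + Dg) = (↑(u⁻¹) : Matrix {x : X // x ∉ A} {x : X // x ∉ A} ℝ)
        * (t • LS) * (↑u : Matrix {x : X // x ∉ A} {x : X // x ∉ A} ℝ) := hconj
    rw [h1, Matrix.exp_units_conj' u (t • LS)]
    rfl
  have hzero : ∀ w ∈ A, ∀ y2, (t • stoppedGen L A) w y2 = 0 := by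
    intro w hw y2
    simp [stoppedGen, hw]
  have hsurv : ∀ z : {x : X // x ∉ A},
      survProb L A t z.1 = (exp (t • LS)).mulVec (fun _ => 1) z := by
    intro z
    have h1 := my_exp_restrict A (t • stoppedGen L A) hzero (fun _ => (1:ℝ)) z
    have h2 : (fun y2 => if y2 ∈ A then (0:ℝ) else 1)
        = (fun w => if h : w ∈ A then (0:ℝ)
            else (fun _ => (1:ℝ)) (⟨w, h⟩ : {x : X // x ∉ A})) := by
      funext w; by_cases hw : w ∈ A <;> simp [hw]
    have h3 : (Matrix.of fun a b : {x : X // x ∉ A} => (t • stoppedGen L A) a.1 b.1)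
        = t • LS := by
      ext a b
      simp [stoppedGen, a.2, hLS]
    rw [survProb, h2, h1, h3]
  have hratio : ∀ z : {x : X // x ∉ A},
      (exp (t • (Mg + Dg))).mulVec f0 z = survProb L A t z.1 / ψ z.1 := by
    intro z
    rw [hexpconj, ← Matrix.mulVec_mulVec, ← Matrix.mulVec_mulVec]
    have hU1 : U.mulVec f0 = fun _ => (1:ℝ) := by
      funext a
      rw [hU, Matrix.mulVec_diagonal]
      exact mul_inv_cancel₀ (hψne a)
    rw [hU1, hW, Matrix.mulVec_diagonal, hsurv z]
    exact (div_eq_inv_mul _ _).symm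
  -- monotonicity ingredients
  have hVmono : Monotone V := fun a b hab =>
    hV_inc a.1 a.2 b.1 b.2 (Subtype.coe_le_coe.2 hab)
  have hf0mono : Monotone f0 := by
    intro a b hab
    exact inv_anti₀ (hψ_pos b.1 b.2) (hψ_dec a.1 a.2 b.1 b.2 (Subtype.coe_le_coe.2 hab))
  have hf0pos : ∀ a, 0 ≤ f0 a := fun a => (inv_pos.2 (hψ_pos a.1 a.2)).le
  have hPent : ∀ s : ℝ, 0 ≤ s → ∀ i j, 0 ≤ exp (s • Mg) i j := by
    intro s hs i j
    refine my_exp_gen_entry_nonneg _ ?_ i j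
    intro i' j' hij
    have hij1 : i'.1 ≠ j'.1 := fun h => hij (Subtype.ext h)
    rw [Matrix.smul_apply, hMg, my_psiGen_offdiag L A ψ hij, smul_eq_mul]
    exact mul_nonneg hs (div_nonneg (mul_nonneg (hL_offdiag i'.1 j'.1 hij1)
      (hψ_pos j'.1 j'.2).le) (hψ_pos i'.1 i'.2).le)
  have hQform : ∀ s : ℝ, exp (s • Dg)
      = Matrix.diagonal (fun a => Real.exp (s * V a)) := by
    intro s
    have h1 : s • Dg = Matrix.diagonal (s • V) := by
      rw [hDg, Matrix.diagonal_smul]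
    rw [h1, Matrix.exp_diagonal]
    congr 1
    funext a
    rw [Pi.exp_def]
    simp only [Pi.smul_apply, smul_eq_mul]
    rw [← Real.exp_eq_exp_ℝ]
  have hmain : ∀ s : ℝ, 0 ≤ s → ∀ k : ℕ,
      (∀ a, 0 ≤ ((exp (s • Mg) * exp (s • Dg)) ^ k).mulVec f0 a) ∧
      Monotone (((exp (s • Mg) * exp (s • Dg)) ^ k).mulVec f0) := by
    intro s hs k
    induction k with
    | zero => rw [pow_zero, Matrix.one_mulVec]; exact ⟨hf0pos, hf0mono⟩
    | succ k ih =>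
      obtain ⟨ihpos, ihmono⟩ := ih
      set g := ((exp (s • Mg) * exp (s • Dg)) ^ k).mulVec f0 with hg
      have hstep : ((exp (s • Mg) * exp (s • Dg)) ^ (k+1)).mulVec f0
          = (exp (s • Mg)).mulVec ((exp (s • Dg)).mulVec g) := by
        rw [pow_succ', ← Matrix.mulVec_mulVec, ← Matrix.mulVec_mulVec]
      have hQg : (exp (s • Dg)).mulVec g = fun a => Real.exp (s * V a) * g a := by
        rw [hQform]
        funext a
        rw [Matrix.mulVec_diagonal]
      have hQpos : ∀ b, 0 ≤ (exp (s • Dg)).mulVec g b := by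
        intro b
        rw [hQg]
        exact mul_nonneg (Real.exp_pos _).le (ihpos b)
      have hQmono : Monotone ((exp (s • Dg)).mulVec g) := by
        rw [hQg]
        intro a b hab
        have h1 : Real.exp (s * V a) ≤ Real.exp (s * V b) :=
          Real.exp_le_exp.2 (mul_le_mul_of_nonneg_left (hVmono hab) hs)
        have h2 : g a ≤ g b := ihmono hab
        have h3 : 0 ≤ g a := ihpos a
        calc Real.exp (s * V a) * g a ≤ Real.exp (s * V a) * g b :=
              mul_le_mul_of_nonneg_left h2 (Real.exp_pos _).le
          _ ≤ Real.exp (s * V b) * g b :=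
              mul_le_mul_of_nonneg_right h1 (le_trans h3 h2)
      constructor
      · intro a
        rw [hstep]
        show 0 ≤ ∑ b, exp (s • Mg) a b * ((exp (s • Dg)).mulVec g) b
        exact Finset.sum_nonneg fun b _ => mul_nonneg (hPent s hs a b) (hQpos b)
      · rw [hstep]
        exact hmono s hs _ hQmono
  have htrot := my_trotter Mg Dg ht
  have hab : (⟨x, hx⟩ : {x : X // x ∉ A}) ≤ ⟨y, hy⟩ := Subtype.coe_le_coe.1 hxy
  have hta := my_tendsto_mulVec f0 (⟨x, hx⟩ : {x : X // x ∉ A}) htrot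
  have htb := my_tendsto_mulVec f0 (⟨y, hy⟩ : {x : X // x ∉ A}) htrot
  have hineq : (exp (t • (Mg + Dg))).mulVec f0 ⟨x, hx⟩
      ≤ (exp (t • (Mg + Dg))).mulVec f0 ⟨y, hy⟩ := by
    refine le_of_tendsto_of_tendsto' hta htb fun k => ?_
    exact (hmain (t / k) (div_nonneg ht (Nat.cast_nonneg k)) k).2 hab
  rw [hratio ⟨x, hx⟩, hratio ⟨y, hy⟩] at hineq
  exact hineq
end
end

section
/- Let X be a finite set, L a Markov generator on X, A ⊆ X, and ψ : X → ℝ with ψ > 0 on A^c and ψ ≡ 0 on A. Let L̄ be the stopped generator, let V : X → ℝ be defined by V(x) = (Lψ)(x)/ψ(x) for x ∉ A and V(x) = 0 for x ∈ A, and let K be the matrix with K(x,y) = L(x,y)·ψ(y)/ψ(x) for x ≠ y with x,y ∈ A^c, K(x,x) = −Σ_{y∈A^c, y≠x} K(x,y) for x ∈ A^c, and all rows indexed by A equal to zero. Then for every φ : X → ℝ vanishing on A, every t ≥ 0 and every x ∈ A^c: (e^{tL̄}(ψ·φ))(x)/ψ(x) = (e^{t(K + D_V)}φ)(x), where D_V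 is the diagonal matrix with diagonal entries V. -/
open scoped Classical
noncomputable section

/-- The matrix `K`: `K(x,y) = L(x,y) ψ(y)/ψ(x)` for `x ≠ y` with `x, y ∈ A^c`,
`K(x,x) = -Σ_{y ∈ A^c, y ≠ x} K(x,y)` for `x ∈ A^c`, and all rows indexed by `A`
(as well as the entries `K(x,y)` with `y ∈ A`) equal to zero. -/
def transfGen {X : Type*} [Fintype X] (L : Matrix X X ℝ) (A : Set X) (ψ : X → ℝ) :
    Matrix X X ℝ :=
  Matrix.of fun x y =>
    if x ∈ A then 0
    else if x = y then -(∑ z, if z ∈ A ∨ z = x then 0 else L x z * ψ z / ψ x)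
    else if y ∈ A then 0
    else L x y * ψ y / ψ x

/-- The potential `V = Lψ/ψ` on `A^c`, set to `0` on `A`. -/
def potential {X : Type*} [Fintype X] (L : Matrix X X ℝ) (A : Set X) (ψ : X → ℝ) (x : X) : ℝ :=
  if x ∈ A then 0 else L.mulVec ψ x / ψ x

/-- If `S * B = C * S` then `S` intertwines the exponentials of `B` and `C`. -/
lemma exp_intertwine {m : Type*} [Fintype m] [DecidableEq m]
    (S B C : Matrix m m ℝ) (h : S * B = C * S) :
    S * NormedSpace.exp B = NormedSpace.exp C * S := by
  letI : SeminormedRing (Matrix m m ℝ) := Matrix.linftyOpSemiNormedRing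
  letI : NormedRing (Matrix m m ℝ) := Matrix.linftyOpNormedRing
  letI : NormedAlgebra ℝ (Matrix m m ℝ) := Matrix.linftyOpNormedAlgebra
  have hpow : ∀ n : ℕ, S * B ^ n = C ^ n * S := by
    intro n
    induction n with
    | zero => simp
    | succ n ih =>
      rw [pow_succ, ← mul_assoc, ih, mul_assoc, h, ← mul_assoc, ← pow_succ]
  have h1 : HasSum (fun n : ℕ => S * ((n.factorial : ℝ)⁻¹ • B ^ n)) (S * NormedSpace.exp B) := by
    rw [NormedSpace.exp_eq_tsum (𝕂 := ℝ)]
    exact (NormedSpace.expSeries_summable' (𝕂 := ℝ) B).hasSum.mul_left S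
  have h2 : HasSum (fun n : ℕ => ((n.factorial : ℝ)⁻¹ • C ^ n) * S) (NormedSpace.exp C * S) := by
    rw [NormedSpace.exp_eq_tsum (𝕂 := ℝ)]
    exact (NormedSpace.expSeries_summable' (𝕂 := ℝ) C).hasSum.mul_right S
  refine h1.unique ?_
  convert h2 using 2 with n
  rw [mul_smul_comm, smul_mul_assoc, hpow]

/-- Diagonal entries of `transfGen` off `A`. -/
lemma transfGen_apply_diag {X : Type*} [Fintype X] (L : Matrix X X ℝ) (A : Set X) (ψ : X → ℝ)
    (hψ_A : ∀ x ∈ A, ψ x = 0) (a : X) (ha : a ∉ A) (hψa : ψ a ≠ 0) :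
    transfGen L A ψ a a = L a a - L.mulVec ψ a / ψ a := by
  unfold transfGen
  rw [Matrix.of_apply, if_neg ha, if_pos rfl]
  have h1 : ∀ z : X, (if z ∈ A ∨ z = a then (0:ℝ) else L a z * ψ z / ψ a)
      = L a z * ψ z / ψ a - (if z = a then L a z * ψ z / ψ a else 0) := by
    intro z
    by_cases hz : z = a
    · subst hz
      rw [if_pos (Or.inr rfl), if_pos rfl]
      ring
    · by_cases hzA : z ∈ A
      · rw [if_pos (Or.inl hzA), if_neg hz, hψ_A z hzA]
        ring
      · rw [if_neg (by tauto), if_neg hz]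
        ring
  rw [Finset.sum_congr rfl fun z _ => h1 z, Finset.sum_sub_distrib]
  have h2 : (∑ z : X, if z = a then L a z * ψ z / ψ a else 0) = L a a * ψ a / ψ a := by
    rw [Finset.sum_eq_single_of_mem a (Finset.mem_univ a)]
    · rw [if_pos rfl]
    · intro b _ hb
      rw [if_neg hb]
  have h3 : L.mulVec ψ a = ∑ z, L a z * ψ z := by
    simp [Matrix.mulVec, dotProduct]
  rw [h2, ← Finset.sum_div, ← h3]
  field_simp
  ring

/-- **Equation (2.3) / Feynman–Kac identity.**  For every `φ` vanishing on `A`, `t ≥ 0`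
and `x ∈ A^c`: `(e^{t L̄}(ψ·φ))(x)/ψ(x) = (e^{t(K + D_V)} φ)(x)`. -/
theorem stopped_semigroup_conjugation
    {X : Type*} [Fintype X] [DecidableEq X]
    (L : Matrix X X ℝ)
    (hL_offdiag : ∀ x y, x ≠ y → 0 ≤ L x y)
    (hL_row : ∀ x, ∑ y, L x y = 0)
    (A : Set X) (ψ : X → ℝ)
    (hψ_pos : ∀ x ∉ A, 0 < ψ x) (hψ_A : ∀ x ∈ A, ψ x = 0) :
    ∀ φ : X → ℝ, (∀ x ∈ A, φ x = 0) → ∀ t : ℝ, 0 ≤ t → ∀ x ∉ A,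
      (NormedSpace.exp (t • stoppedGen L A)).mulVec (fun y => ψ y * φ y) x / ψ x =
        (NormedSpace.exp
            (t • (transfGen L A ψ + Matrix.diagonal (potential L A ψ)))).mulVec φ x := by
  intro φ hφ t ht x hx
  set M : Matrix X X ℝ := transfGen L A ψ + Matrix.diagonal (potential L A ψ) with hM
  set S : Matrix X X ℝ := Matrix.diagonal ψ with hS
  -- the key algebraic intertwining relation S * M = L̄ * S
  have key : S * M = stoppedGen L A * S := by
    ext a b
    rw [hS, hM, Matrix.diagonal_mul, Matrix.mul_diagonal]
    by_cases ha : a ∈ A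
    · simp [transfGen, potential, stoppedGen, ha, hψ_A a ha, Matrix.diagonal]
    · have hψa : ψ a ≠ 0 := (hψ_pos a ha).ne'
      by_cases hab : a = b
      · subst hab
        simp only [Matrix.add_apply, Matrix.diagonal_apply_eq, stoppedGen, Matrix.of_apply,
          if_neg ha, potential]
        rw [transfGen_apply_diag L A ψ hψ_A a ha hψa]
        field_simp
        ring
      · by_cases hb : b ∈ A
        · simp [transfGen, potential, stoppedGen, ha, hab, hb, hψ_A b hb,
            Matrix.diagonal_apply_ne _ hab]
        · simp only [Matrix.add_apply, transfGen, Matrix.of_apply, if_neg ha, if_neg hab,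
            if_neg hb, Matrix.diagonal_apply_ne _ hab, add_zero, stoppedGen, if_neg ha]
          field_simp
  -- extend the intertwining to `t •`
  have keyt : S * (t • M) = (t • stoppedGen L A) * S := by
    rw [mul_smul_comm, key, smul_mul_assoc]
  have hexp := exp_intertwine S (t • M) (t • stoppedGen L A) keyt
  -- translate to mulVec
  have hmv : (NormedSpace.exp (t • stoppedGen L A)).mulVec (fun y => ψ y * φ y)
      = fun y => ψ y * (NormedSpace.exp (t • M)).mulVec φ y := by
    have h1 : (fun y => ψ y * φ y) = S.mulVec φ := by
      funext y; rw [hS, Matrix.mulVec_diagonal]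
    rw [h1, Matrix.mulVec_mulVec, ← hexp, ← Matrix.mulVec_mulVec]
    funext y
    rw [hS, Matrix.mulVec_diagonal]
  rw [congrFun hmv x]
  rw [mul_comm, mul_div_assoc, div_self (hψ_pos x hx).ne', mul_one]
end
end

section
/- Let A ⊆ Ω_n be an upper set (η ∈ A and η ≤ ζ imply ζ ∈ A) with A ≠ Ω_n, and let β > 0. For the generator L_β^{n,ρ}, the survival probability is decreasing: for every t ≥ 0 and all η ≤ ζ in Ω_n, P_ζ(τ_A > t) ≤ P_η(τ_A > t). Consequently, for every t ≥ 0 and every increasing φ : Ω_n → ℝ, T_t(ν_ρ)(φ) ≤ ν_ρ(φ), i.e. T_t(ν_ρ) ≼ ν_ρ. -/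
open scoped Classical
noncomputable section

/-- `Λ_n = [-n,n]^d ∩ ℤ^d`. -/
def Lam (d n : ℕ) : Finset (Fin d → ℤ) :=
  Finset.Icc (fun _ => -(n : ℤ)) (fun _ => (n : ℤ))

/-- The sites of `Λ_n`. -/
abbrev Site (d n : ℕ) := {i : Fin d → ℤ // i ∈ Lam d n}

/-- `Ω_n = {0,1}^{Λ_n}` (with `Bool` for `{0,1}`, ordered by `false < true`). -/
abbrev Conf (d n : ℕ) := Site d n → Bool

/-- The nearest-neighbor relation on `ℤ^d`. -/
def Nbr {d : ℕ} (i j : Fin d → ℤ) : Prop := ∑ k, |i k - j k| = 1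

/-- The origin, as a site of `Λ_n`. -/
def site0 (d n : ℕ) : Site d n :=
  ⟨0, by simp [Lam, Finset.mem_Icc, Pi.le_def]⟩

/-- `T^{i,j}η` exchanges the coordinates `i` and `j` of `η`. -/
def exch {d n : ℕ} (i j : Site d n) (η : Conf d n) : Conf d n :=
  fun k => if k = i then η j else if k = j then η i else η k

/-- `σ^i η` flips the coordinate `i` of `η`. -/
def flp {d n : ℕ} (i : Site d n) (η : Conf d n) : Conf d n :=
  fun k => if k = i then !(η k) else η k

/-- `n(i) = #{j ∉ Λ_n : j ∼ i}` (each site of `ℤ^d` has exactly `2d` neighbors). -/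
def nOut {d n : ℕ} (i : Site d n) : ℤ :=
  2 * d - ((Lam d n).filter (fun j => Nbr i.1 j)).card

/-- `κ = √((1-ρ)/ρ)`. -/
def kap (ρ : ℝ) : ℝ := Real.sqrt ((1 - ρ) / ρ)

/-- `κ^{2η(i)-1}`. -/
def bdRate {d n : ℕ} (ρ : ℝ) (η : Conf d n) (i : Site d n) : ℝ :=
  kap ρ ^ (2 * (if η i then (1 : ℤ) else 0) - 1)

/-- The finite-volume SSEP generator with `ρ`-boundary:
`L^{n,ρ}φ(η) = Σ_{i∼j, i,j∈Λ_n}(φ(T^{i,j}η) − φ(η))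
             + Σ_{i∈∂Λ_n} n(i) κ^{2η(i)−1}(φ(σ^iη) − φ(η))`
(the sum over bonds `i ∼ j` is written as half the sum over ordered pairs). -/
def Lse {d n : ℕ} (ρ : ℝ) (φ : Conf d n → ℝ) (η : Conf d n) : ℝ :=
  (∑ i : Site d n, ∑ j : Site d n,
      if Nbr i.1 j.1 then φ (exch i j η) - φ η else 0) / 2
  + ∑ i : Site d n, (nOut i : ℝ) * bdRate ρ η i * (φ (flp i η) - φ η)

/-- `L_β^{n,ρ}φ = L^{n,ρ}φ + (β−1)(φ∘T^{0,0'} − φ)`, where `z'` plays the role of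
the fixed neighbor `0'` of the origin. -/
def Lbeta {d n : ℕ} (ρ β : ℝ) (z' : Site d n) (φ : Conf d n → ℝ) (η : Conf d n) : ℝ :=
  Lse ρ φ η + (β - 1) * (φ (exch (site0 d n) z' η) - φ η)

/-- The matrix of an operator on `Conf d n → ℝ` (entry `(η,ζ)` is the operator
applied to the indicator of `ζ`, evaluated at `η`). -/
def opMatrix {d n : ℕ} (Lop : (Conf d n → ℝ) → Conf d n → ℝ) :
    Matrix (Conf d n) (Conf d n) ℝ :=
  Matrix.of fun η ζ => Lop (fun ξ => if ξ = ζ then 1 else 0) η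

/-- The stopped matrix: rows indexed by `A` are replaced by zero rows. -/
def stopped {d n : ℕ} (A : Set (Conf d n)) (M : Matrix (Conf d n) (Conf d n) ℝ) :
    Matrix (Conf d n) (Conf d n) ℝ :=
  Matrix.of fun η ζ => if η ∈ A then 0 else M η ζ

/-- `P_η(τ_A > t) = (e^{t L̄} 1_{A^c})(η)`. -/
def surv {d n : ℕ} (A : Set (Conf d n)) (M : Matrix (Conf d n) (Conf d n) ℝ)
    (t : ℝ) (η : Conf d n) : ℝ :=
  (NormedSpace.exp (t • stopped A M)).mulVec (fun ζ => if ζ ∈ A then 0 else 1) η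

/-- The product Bernoulli(`ρ`) measure on `Ω_n`. -/
def nuRho {d n : ℕ} (ρ : ℝ) (η : Conf d n) : ℝ :=
  ∏ i, if η i then ρ else 1 - ρ

/-- The law at time `t` conditioned on survival, started from `ν_ρ`:
`T_t(ν_ρ)(φ) = [Σ_η ν_ρ(η)(e^{tL̄}(1_{A^c}φ))(η)] / [Σ_η ν_ρ(η)(e^{tL̄}1_{A^c})(η)]`. -/
def Tt {d n : ℕ} (ρ : ℝ) (A : Set (Conf d n)) (M : Matrix (Conf d n) (Conf d n) ℝ)
    (t : ℝ) (φ : Conf d n → ℝ) : ℝ :=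
  (∑ η, nuRho ρ η *
      (NormedSpace.exp (t • stopped A M)).mulVec
        (fun ζ => if ζ ∈ A then 0 else φ ζ) η) /
    ∑ η, nuRho ρ η * surv A M t η

namespace SSEP
set_option synthInstance.maxHeartbeats 1000000
set_option maxHeartbeats 1600000
open Finset

variable {d n : ℕ}

lemma exch_symm (i j : Site d n) (η : Conf d n) : exch i j η = exch j i η := by
  by_cases hij : i = j
  · subst hij; rfl
  funext k
  simp only [exch]
  by_cases hi : k = i
  · subst hi; simp [hij]
  · by_cases hj : k = j
    · subst hj; simp [hi, Ne.symm hij]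
    · simp [hi, hj]

lemma exch_eq_comp (i j : Site d n) (η : Conf d n) :
    exch i j η = η ∘ Equiv.swap i j := by
  funext k
  simp only [exch, Function.comp_apply, Equiv.swap_apply_def]
  by_cases hi : k = i
  · subst hi; simp
  · by_cases hj : k = j
    · subst hj; simp [hi]
    · simp [hi, hj]

lemma exch_invol (i j : Site d n) (η : Conf d n) : exch i j (exch i j η) = η := by
  simp only [exch_eq_comp]
  funext k
  simp

lemma exch_mono (i j : Site d n) {η ζ : Conf d n} (h : η ≤ ζ) :
    exch i j η ≤ exch i j ζ := by
  intro k
  simp only [exch]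
  split_ifs <;> apply h

lemma flp_eq_update (i : Site d n) (η : Conf d n) :
    flp i η = Function.update η i (!η i) := by
  funext k
  simp only [flp, Function.update]
  by_cases h : k = i
  · subst h; simp
  · simp [h]

lemma flp_invol (i : Site d n) (η : Conf d n) : flp i (flp i η) = η := by
  funext k
  simp only [flp]
  by_cases h : k = i <;> simp [h]

lemma nuRho_exch (ρ : ℝ) (i j : Site d n) (η : Conf d n) :
    nuRho ρ (exch i j η) = nuRho ρ η := by
  rw [exch_eq_comp]
  unfold nuRho
  exact Equiv.prod_comp (Equiv.swap i j) (fun k => if η k then ρ else 1 - ρ)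

lemma kap_pos {ρ : ℝ} (hρ : ρ ∈ Set.Ioo (0:ℝ) 1) : 0 < kap ρ := by
  apply Real.sqrt_pos.2
  apply div_pos (by linarith [hρ.2]) hρ.1

lemma kap_sq {ρ : ℝ} (hρ : ρ ∈ Set.Ioo (0:ℝ) 1) : kap ρ ^ 2 = (1 - ρ) / ρ := by
  rw [kap, Real.sq_sqrt]
  apply div_nonneg (by linarith [hρ.2]) hρ.1.le

lemma bdRate_true {ρ : ℝ} (η : Conf d n) (i : Site d n) (h : η i = true) :
    bdRate ρ η i = kap ρ := by
  simp [bdRate, h]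

lemma bdRate_false {ρ : ℝ} (η : Conf d n) (i : Site d n) (h : η i = false) :
    bdRate ρ η i = (kap ρ)⁻¹ := by
  simp [bdRate, h]

lemma bdRate_pos {ρ : ℝ} (hρ : ρ ∈ Set.Ioo (0:ℝ) 1) (η : Conf d n) (i : Site d n) :
    0 < bdRate ρ η i :=
  zpow_pos (kap_pos hρ) _

lemma bdRate_le {ρ : ℝ} (hρ : ρ ∈ Set.Ioo (0:ℝ) 1) (η : Conf d n) (i : Site d n) :
    bdRate ρ η i ≤ kap ρ + (kap ρ)⁻¹ := by
  have hk := kap_pos hρ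
  have hki : 0 < (kap ρ)⁻¹ := by positivity
  by_cases h : η i
  · rw [bdRate_true η i h]; linarith
  · rw [bdRate_false η i (by simpa using h)]; linarith

lemma nOut_nonneg (i : Site d n) : (0:ℤ) ≤ nOut i := by
  unfold nOut
  have hcard : ((Lam d n).filter (fun j => Nbr i.1 j)).card ≤ 2 * d := by
    have hsub : (Lam d n).filter (fun j => Nbr i.1 j) ⊆
        Finset.image (fun p : Fin d × Bool =>
          Function.update i.1 p.1 (i.1 p.1 + (if p.2 then 1 else -1))) Finset.univ := by
      intro j hj
      have hnbr : Nbr i.1 j := (Finset.mem_filter.1 hj).2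
      unfold Nbr at hnbr
      have hnn : ∀ k : Fin d, 0 ≤ |i.1 k - j k| := fun k => abs_nonneg _
      have hex : ∃ k₀ : Fin d, |i.1 k₀ - j k₀| ≠ 0 := by
        by_contra hc
        push_neg at hc
        rw [Finset.sum_eq_zero (fun k _ => hc k)] at hnbr
        exact one_ne_zero hnbr.symm
      obtain ⟨k₀, hk₀⟩ := hex
      have hle : |i.1 k₀ - j k₀| ≤ 1 := by
        rw [← hnbr]
        exact Finset.single_le_sum (fun k _ => hnn k) (Finset.mem_univ k₀)
      have h0 := hnn k₀
      have heq1 : |i.1 k₀ - j k₀| = 1 := le_antisymm hle (by omega)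
      have hsum_erase : ∑ k ∈ Finset.univ.erase k₀, |i.1 k - j k| = 0 := by
        have hadd := Finset.add_sum_erase Finset.univ (fun k => |i.1 k - j k|)
          (Finset.mem_univ k₀)
        omega
      have hrest : ∀ l : Fin d, l ≠ k₀ → i.1 l = j l := by
        intro l hl
        have h00 : |i.1 l - j l| = 0 :=
          (Finset.sum_eq_zero_iff_of_nonneg (fun k _ => hnn k)).1 hsum_erase l
            (Finset.mem_erase.2 ⟨hl, Finset.mem_univ l⟩)
        have := abs_eq_zero.1 h00
        omega
      rw [Finset.mem_image]
      rcases (abs_eq (by norm_num : (0:ℤ) ≤ 1)).1 heq1 with hca | hca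
      · refine ⟨(k₀, false), Finset.mem_univ _, ?_⟩
        funext l
        by_cases hl : l = k₀
        · subst hl; simp only [Function.update_self]; norm_num; omega
        · rw [Function.update_of_ne hl]; exact hrest l hl
      · refine ⟨(k₀, true), Finset.mem_univ _, ?_⟩
        funext l
        by_cases hl : l = k₀
        · subst hl; simp only [Function.update_self]; norm_num; omega
        · rw [Function.update_of_ne hl]; exact hrest l hl
    calc ((Lam d n).filter (fun j => Nbr i.1 j)).card
        ≤ _ := Finset.card_le_card hsub
      _ ≤ (Finset.univ : Finset (Fin d × Bool)).card := Finset.card_image_le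
      _ = 2 * d := by simp [Fintype.card_prod]; ring
  have : ((((Lam d n).filter (fun j => Nbr i.1 j)).card : ℤ)) ≤ 2 * d := by
    exact_mod_cast hcard
  omega

end SSEP

namespace SSEP
variable {d n : ℕ}
lemma flp_apply_self (i : Site d n) (η : Conf d n) : flp i η i = !η i := by
  simp [flp]

lemma flp_apply_ne (i k : Site d n) (η : Conf d n) (h : k ≠ i) : flp i η k = η k := by
  simp [flp, h]
end SSEP
namespace SSEP
set_option synthInstance.maxHeartbeats 1000000
set_option maxHeartbeats 1600000
open Finset

variable {d n : ℕ}

/-- Symmetrized bond weights for `L_β`. -/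
def wgt (β : ℝ) (z' : Site d n) (i j : Site d n) : ℝ :=
  (if Nbr i.1 j.1 then (1:ℝ)/2 else 0)
  + (if (i, j) = (site0 d n, z') then (β-1)/2 else 0)
  + (if (i, j) = (z', site0 d n) then (β-1)/2 else 0)

/-- Boundary flip rates. -/
def brate (ρ : ℝ) (η : Conf d n) (i : Site d n) : ℝ := (nOut i : ℝ) * bdRate ρ η i

lemma Nbr_symm {i j : Fin d → ℤ} (h : Nbr i j) : Nbr j i := by
  unfold Nbr at *
  calc ∑ k, |j k - i k| = ∑ k, |i k - j k| := by
        apply Finset.sum_congr rfl; intro k _; exact abs_sub_comm _ _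
    _ = 1 := h

lemma z'_ne_site0 {z' : Site d n} (hz' : Nbr (0 : Fin d → ℤ) z'.1) : z' ≠ site0 d n := by
  intro h
  unfold Nbr at hz'
  rw [h] at hz'
  simp [site0] at hz'

lemma wgt_symm (β : ℝ) (z' : Site d n) (i j : Site d n) : wgt β z' i j = wgt β z' j i := by
  unfold wgt
  have h1 : Nbr i.1 j.1 ↔ Nbr j.1 i.1 := ⟨Nbr_symm, Nbr_symm⟩
  have h2 : ((i, j) = (site0 d n, z')) ↔ ((j, i) = (z', site0 d n)) := by
    constructor <;> (intro h; rw [Prod.ext_iff] at *; exact ⟨h.2, h.1⟩)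
  have h3 : ((i, j) = (z', site0 d n)) ↔ ((j, i) = (site0 d n, z')) := by
    constructor <;> (intro h; rw [Prod.ext_iff] at *; exact ⟨h.2, h.1⟩)
  rw [if_congr h1 rfl rfl, if_congr h2 rfl rfl, if_congr h3 rfl rfl]
  ring

lemma wgt_nonneg {β : ℝ} (hβ : 0 < β) {z' : Site d n} (hz' : Nbr (0 : Fin d → ℤ) z'.1)
    (i j : Site d n) : 0 ≤ wgt β z' i j := by
  have hne := z'_ne_site0 hz'
  unfold wgt
  by_cases h2 : (i, j) = (site0 d n, z')
  · have hij : i = site0 d n ∧ j = z' := Prod.ext_iff.1 h2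
    have h3 : ¬ ((i, j) = (z', site0 d n)) := by
      intro h
      have h4 : i = z' := (Prod.ext_iff.1 h).1
      exact hne (hij.1 ▸ h4.symm ▸ rfl)
    have hnbr : Nbr i.1 j.1 := by
      rw [hij.1, hij.2]
      have : (site0 d n).1 = (0 : Fin d → ℤ) := rfl
      rw [this]; exact hz'
    rw [if_pos hnbr, if_pos h2, if_neg h3]
    linarith
  · by_cases h3 : (i, j) = (z', site0 d n)
    · have hij : i = z' ∧ j = site0 d n := Prod.ext_iff.1 h3
      have hnbr : Nbr i.1 j.1 := by
        rw [hij.1, hij.2]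
        exact Nbr_symm hz'
      rw [if_pos hnbr, if_neg h2, if_pos h3]
      linarith
    · rw [if_neg h2, if_neg h3]
      split_ifs <;> norm_num

lemma brate_nonneg {ρ : ℝ} (hρ : ρ ∈ Set.Ioo (0:ℝ) 1) (η : Conf d n) (i : Site d n) :
    0 ≤ brate ρ η i := by
  have h1 : (0:ℝ) ≤ (nOut i : ℝ) := by exact_mod_cast nOut_nonneg i
  exact mul_nonneg h1 (bdRate_pos hρ η i).le

lemma brate_le {ρ : ℝ} (hρ : ρ ∈ Set.Ioo (0:ℝ) 1) (η : Conf d n) (i : Site d n) :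
    brate ρ η i ≤ (nOut i : ℝ) * (kap ρ + (kap ρ)⁻¹) := by
  have h1 : (0:ℝ) ≤ (nOut i : ℝ) := by exact_mod_cast nOut_nonneg i
  exact mul_le_mul_of_nonneg_left (bdRate_le hρ η i) h1

/-- a helper: double sum of a pair indicator -/
lemma sum_pair_indicator (a b : Site d n) (c : ℝ) (X : Site d n → Site d n → ℝ) :
    ∑ i : Site d n, ∑ j : Site d n, (if (i, j) = (a, b) then c else 0) * X i j
      = c * X a b := by
  rw [Finset.sum_eq_single a]
  · rw [Finset.sum_eq_single b]
    · simp
    · intro j _ hj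
      rw [if_neg (by simp [Prod.ext_iff, hj]), zero_mul]
    · intro h; exact absurd (Finset.mem_univ b) h
  · intro i _ hi
    apply Finset.sum_eq_zero
    intro j _
    rw [if_neg (by simp [Prod.ext_iff, hi]), zero_mul]
  · intro h; exact absurd (Finset.mem_univ a) h

/-- Representation of `L_β` with symmetrized nonnegative weights. -/
lemma Lbeta_rep (ρ β : ℝ) (z' : Site d n) (φ : Conf d n → ℝ) (η : Conf d n) :
    Lbeta ρ β z' φ η =
      (∑ i : Site d n, ∑ j : Site d n, wgt β z' i j * (φ (exch i j η) - φ η))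
      + ∑ i : Site d n, brate ρ η i * (φ (flp i η) - φ η) := by
  unfold Lbeta Lse wgt brate
  have hsplit : ∀ i j : Site d n,
      ((if Nbr i.1 j.1 then (1:ℝ)/2 else 0)
        + (if (i, j) = (site0 d n, z') then (β-1)/2 else 0)
        + (if (i, j) = (z', site0 d n) then (β-1)/2 else 0)) * (φ (exch i j η) - φ η)
      = (if Nbr i.1 j.1 then (1:ℝ)/2 else 0) * (φ (exch i j η) - φ η)
        + (if (i, j) = (site0 d n, z') then (β-1)/2 else 0) * (φ (exch i j η) - φ η)
        + (if (i, j) = (z', site0 d n) then (β-1)/2 else 0) * (φ (exch i j η) - φ η) := by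
    intro i j; ring
  simp only [hsplit, Finset.sum_add_distrib]
  rw [sum_pair_indicator (site0 d n) z' ((β-1)/2) (fun i j => φ (exch i j η) - φ η)]
  rw [sum_pair_indicator z' (site0 d n) ((β-1)/2) (fun i j => φ (exch i j η) - φ η)]
  have hcomm : exch z' (site0 d n) η = exch (site0 d n) z' η := exch_symm _ _ _
  rw [hcomm]
  have hhalf : ∀ i j : Site d n,
      (if Nbr i.1 j.1 then (1:ℝ)/2 else 0) * (φ (exch i j η) - φ η)
      = (if Nbr i.1 j.1 then (φ (exch i j η) - φ η) else 0) / 2 := by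
    intro i j; split_ifs <;> ring
  simp only [hhalf, ← Finset.sum_div]
  ring
end SSEP
namespace SSEP
set_option synthInstance.maxHeartbeats 1000000
set_option maxHeartbeats 1600000
open Finset

variable {d n : ℕ}

lemma delta_sum (x : Conf d n) (f : Conf d n → ℝ) :
    ∑ ζ : Conf d n, (if x = ζ then (1:ℝ) else 0) * f ζ = f x := by
  rw [Finset.sum_eq_single x]
  · simp
  · intro b _ hb
    rw [if_neg (fun h => hb h.symm), zero_mul]
  · intro h; exact absurd (Finset.mem_univ x) h

lemma opMatrix_mulVec (ρ β : ℝ) (z' : Site d n) (f : Conf d n → ℝ) (x : Conf d n) :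
    (opMatrix (Lbeta ρ β z')).mulVec f x = Lbeta ρ β z' f x := by
  unfold Matrix.mulVec dotProduct opMatrix
  simp only [Matrix.of_apply]
  rw [Lbeta_rep ρ β z' f x]
  have hrw : ∀ ζ : Conf d n,
      Lbeta ρ β z' (fun ξ => if ξ = ζ then (1:ℝ) else 0) x * f ζ
      = (∑ i : Site d n, ∑ j : Site d n,
          wgt β z' i j * ((if exch i j x = ζ then (1:ℝ) else 0) * f ζ
            - (if x = ζ then (1:ℝ) else 0) * f ζ))
        + ∑ i : Site d n, brate ρ x i * ((if flp i x = ζ then (1:ℝ) else 0) * f ζ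
            - (if x = ζ then (1:ℝ) else 0) * f ζ) := by
    intro ζ
    rw [Lbeta_rep ρ β z' _ x]
    rw [add_mul, Finset.sum_mul]
    congr 1
    · apply Finset.sum_congr rfl; intro i _
      rw [Finset.sum_mul]
      apply Finset.sum_congr rfl; intro j _
      ring
    · rw [Finset.sum_mul]
      apply Finset.sum_congr rfl; intro i _
      ring
  simp only [hrw]
  rw [Finset.sum_add_distrib]
  congr 1
  · rw [Finset.sum_comm]
    apply Finset.sum_congr rfl; intro i _
    rw [Finset.sum_comm]
    apply Finset.sum_congr rfl; intro j _
    rw [← Finset.mul_sum]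
    congr 1
    rw [Finset.sum_sub_distrib, delta_sum, delta_sum]
  · rw [Finset.sum_comm]
    apply Finset.sum_congr rfl; intro i _
    rw [← Finset.mul_sum]
    congr 1
    rw [Finset.sum_sub_distrib, delta_sum, delta_sum]

lemma stopped_mulVec (A : Set (Conf d n)) (M : Matrix (Conf d n) (Conf d n) ℝ)
    (f : Conf d n → ℝ) (x : Conf d n) :
    (stopped A M).mulVec f x = if x ∈ A then 0 else M.mulVec f x := by
  unfold Matrix.mulVec dotProduct stopped
  simp only [Matrix.of_apply]
  by_cases h : x ∈ A
  · simp [h]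
  · simp [h]

end SSEP
namespace SSEP
set_option synthInstance.maxHeartbeats 1000000
set_option maxHeartbeats 1600000
open Finset

variable {d n : ℕ}

/-- The global rate bound used to make `L̄ + c` positivity/monotonicity preserving. -/
def cbd (ρ β : ℝ) (z' : Site d n) : ℝ :=
  (∑ i : Site d n, ∑ j : Site d n, wgt β z' i j)
  + ∑ i : Site d n, (nOut i : ℝ) * (kap ρ + (kap ρ)⁻¹)

/-- The cone of nonnegative decreasing functions vanishing on `A`. -/
def InC (A : Set (Conf d n)) (f : Conf d n → ℝ) : Prop :=
  Antitone f ∧ (∀ a ∈ A, f a = 0) ∧ ∀ x, 0 ≤ f x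

section core
variable {ρ β : ℝ} {z' : Site d n} {A : Set (Conf d n)}
  (hρ : ρ ∈ Set.Ioo (0:ℝ) 1) (hβ : 0 < β) (hz' : Nbr (0 : Fin d → ℤ) z'.1)
  (hA_upper : ∀ η ζ : Conf d n, η ∈ A → η ≤ ζ → ζ ∈ A)

include hρ hβ hz' hA_upper

omit hA_upper in

lemma key_nonneg {f : Conf d n → ℝ} (hf : InC A f) (x : Conf d n) :
    0 ≤ Lbeta ρ β z' f x + cbd ρ β z' * f x := by
  obtain ⟨hanti, hvan, hpos⟩ := hf
  have hwnn : ∀ i j : Site d n, 0 ≤ wgt β z' i j := wgt_nonneg hβ hz'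
  rw [Lbeta_rep]
  have hpart1 : 0 ≤ (∑ i : Site d n, ∑ j : Site d n, wgt β z' i j * (f (exch i j x) - f x))
      + (∑ i : Site d n, ∑ j : Site d n, wgt β z' i j) * f x := by
    have heq : (∑ i : Site d n, ∑ j : Site d n, wgt β z' i j * (f (exch i j x) - f x))
        + (∑ i : Site d n, ∑ j : Site d n, wgt β z' i j) * f x
        = ∑ i : Site d n, ∑ j : Site d n, wgt β z' i j * f (exch i j x) := by
      rw [Finset.sum_mul, ← Finset.sum_add_distrib]
      apply Finset.sum_congr rfl; intro i _
      rw [Finset.sum_mul, ← Finset.sum_add_distrib]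
      apply Finset.sum_congr rfl; intro j _
      ring
    rw [heq]
    apply Finset.sum_nonneg; intro i _
    apply Finset.sum_nonneg; intro j _
    exact mul_nonneg (hwnn i j) (hpos _)
  have hpart2 : 0 ≤ (∑ i : Site d n, brate ρ x i * (f (flp i x) - f x))
      + (∑ i : Site d n, (nOut i : ℝ) * (kap ρ + (kap ρ)⁻¹)) * f x := by
    rw [Finset.sum_mul, ← Finset.sum_add_distrib]
    apply Finset.sum_nonneg; intro i _
    have h1 := brate_le hρ x i
    have h2 := brate_nonneg hρ x i
    have h3 := hpos (flp i x)
    have h4 := hpos x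
    nlinarith
  unfold cbd
  linarith

lemma cone_step {f : Conf d n → ℝ} (hf : InC A f) :
    InC A (fun x => (if x ∈ A then 0 else Lbeta ρ β z' f x) + cbd ρ β z' * f x) := by
  obtain ⟨hanti, hvan, hpos⟩ := hf
  have hwnn : ∀ i j : Site d n, 0 ≤ wgt β z' i j := wgt_nonneg hβ hz'
  have hk := kap_pos hρ
  have hkinv : (0:ℝ) ≤ (kap ρ)⁻¹ := by positivity
  refine ⟨?_, ?_, ?_⟩
  · -- Antitone
    intro η ζ hle
    simp only
    by_cases hζ : ζ ∈ A
    · rw [if_pos hζ, hvan ζ hζ, mul_zero, add_zero]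
      by_cases hη : η ∈ A
      · rw [if_pos hη, hvan η hη, mul_zero, add_zero]
      · rw [if_neg hη]
        exact key_nonneg hρ hβ hz' ⟨hanti, hvan, hpos⟩ η
    · have hη : η ∉ A := fun h => hζ (hA_upper η ζ h hle)
      rw [if_neg hζ, if_neg hη, Lbeta_rep, Lbeta_rep]
      have hD0 : 0 ≤ f η - f ζ := by have := hanti hle; linarith
      -- exchange part
      have hsum1 : (∑ i : Site d n, ∑ j : Site d n, wgt β z' i j * (f (exch i j ζ) - f ζ))
          ≤ (∑ i : Site d n, ∑ j : Site d n, wgt β z' i j * (f (exch i j η) - f η))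
            + (∑ i : Site d n, ∑ j : Site d n, wgt β z' i j) * (f η - f ζ) := by
        have heq : (∑ i : Site d n, ∑ j : Site d n, wgt β z' i j * (f (exch i j η) - f η))
            + (∑ i : Site d n, ∑ j : Site d n, wgt β z' i j) * (f η - f ζ)
            = ∑ i : Site d n, ∑ j : Site d n,
                (wgt β z' i j * (f (exch i j η) - f η) + wgt β z' i j * (f η - f ζ)) := by
          rw [Finset.sum_mul, ← Finset.sum_add_distrib]
          apply Finset.sum_congr rfl; intro i _
          rw [Finset.sum_mul, ← Finset.sum_add_distrib]
        rw [heq]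
        apply Finset.sum_le_sum; intro i _
        apply Finset.sum_le_sum; intro j _
        have h1 : f (exch i j ζ) ≤ f (exch i j η) := hanti (exch_mono i j hle)
        nlinarith [hwnn i j]
      -- flip part
      have hfl : ∀ i : Site d n, brate ρ ζ i * (f (flp i ζ) - f ζ)
          ≤ brate ρ η i * (f (flp i η) - f η)
            + (nOut i : ℝ) * (kap ρ + (kap ρ)⁻¹) * (f η - f ζ) := by
        intro i
        have hNn : (0:ℝ) ≤ (nOut i : ℝ) := by exact_mod_cast nOut_nonneg i
        by_cases hcase : η i = ζ i
        · have hbeq : brate ρ η i = brate ρ ζ i := by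
            unfold brate bdRate; rw [hcase]
          have hmono : flp i η ≤ flp i ζ := by
            intro k
            by_cases hk : k = i
            · subst hk; rw [flp_apply_self, flp_apply_self, hcase]
            · rw [flp_apply_ne i k _ hk, flp_apply_ne i k _ hk]; exact hle k
          have h1 : f (flp i ζ) ≤ f (flp i η) := hanti hmono
          have h2 := brate_le hρ ζ i
          have h3 := brate_nonneg hρ ζ i
          rw [hbeq]
          nlinarith
        · have hvals : η i = false ∧ ζ i = true := by
            have hbb := hle i
            cases hb : η i
            · cases hb2 : ζ i
              · exact absurd (hb.trans hb2.symm) hcase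
              · exact ⟨rfl, rfl⟩
            · cases hb2 : ζ i
              · exfalso
                rw [hb, hb2] at hbb
                rw [Bool.le_iff_imp] at hbb
                exact Bool.noConfusion (hbb rfl)
              · exact absurd (hb.trans hb2.symm) hcase
          have hbη : brate ρ η i = (nOut i : ℝ) * (kap ρ)⁻¹ := by
            unfold brate; rw [bdRate_false η i hvals.1]
          have hbζ : brate ρ ζ i = (nOut i : ℝ) * kap ρ := by
            unfold brate; rw [bdRate_true ζ i hvals.2]
          have hup : η ≤ flp i ζ := by
            intro k
            by_cases hk : k = i
            · subst hk; rw [flp_apply_self, hvals.1]; exact Bool.false_le _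
            · rw [flp_apply_ne i k _ hk]; exact hle k
          have hdn : flp i η ≤ ζ := by
            intro k
            by_cases hk : k = i
            · subst hk; rw [flp_apply_self, hvals.2]; exact Bool.le_true _
            · rw [flp_apply_ne i k _ hk]; exact hle k
          have h1 : f (flp i ζ) ≤ f η := hanti hup
          have h2 : f ζ ≤ f (flp i η) := hanti hdn
          rw [hbη, hbζ]
          nlinarith [mul_nonneg (mul_nonneg hNn hk.le) (sub_nonneg.2 h1),
            mul_nonneg (mul_nonneg hNn hkinv) (sub_nonneg.2 h2)]
      have hsum2 : (∑ i : Site d n, brate ρ ζ i * (f (flp i ζ) - f ζ))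
          ≤ (∑ i : Site d n, brate ρ η i * (f (flp i η) - f η))
            + (∑ i : Site d n, (nOut i : ℝ) * (kap ρ + (kap ρ)⁻¹)) * (f η - f ζ) := by
        rw [Finset.sum_mul, ← Finset.sum_add_distrib]
        exact Finset.sum_le_sum (fun i _ => hfl i)
      unfold cbd
      nlinarith [hsum1, hsum2]
  · -- vanishing on A
    intro a ha
    simp only [if_pos ha, hvan a ha, mul_zero, add_zero]
  · -- nonneg
    intro x
    simp only
    by_cases hx : x ∈ A
    · rw [if_pos hx, hvan x hx, mul_zero, add_zero]
    · rw [if_neg hx]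
      exact key_nonneg hρ hβ hz' ⟨hanti, hvan, hpos⟩ x

end core
end SSEP
namespace SSEP
set_option synthInstance.maxHeartbeats 1000000
set_option maxHeartbeats 1600000
open Finset

variable {d n : ℕ}

/-- The `mulVec`-evaluation linear functional. -/
def mvFun (f : Conf d n → ℝ) (x : Conf d n) :
    Matrix (Conf d n) (Conf d n) ℝ →ₗ[ℝ] ℝ where
  toFun X := X.mulVec f x
  map_add' X Y := by simp [Matrix.add_mulVec]
  map_smul' c X := by simp [Matrix.smul_mulVec]

/-- The entry-evaluation linear functional. -/
def enFun (x y : Conf d n) :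
    Matrix (Conf d n) (Conf d n) ℝ →ₗ[ℝ] ℝ where
  toFun X := X x y
  map_add' X Y := by simp
  map_smul' c X := by simp

lemma exp_lin (Φ : Matrix (Conf d n) (Conf d n) ℝ →ₗ[ℝ] ℝ)
    (X : Matrix (Conf d n) (Conf d n) ℝ) :
    Φ (NormedSpace.exp X) = ∑' k : ℕ, ((k.factorial : ℝ))⁻¹ * Φ (X ^ k) := by
  letI : SeminormedRing (Matrix (Conf d n) (Conf d n) ℝ) := Matrix.linftyOpSemiNormedRing
  letI : NormedRing (Matrix (Conf d n) (Conf d n) ℝ) := Matrix.linftyOpNormedRing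
  letI : NormedAlgebra ℝ (Matrix (Conf d n) (Conf d n) ℝ) := Matrix.linftyOpNormedAlgebra
  have hsum := NormedSpace.expSeries_summable' (𝕂 := ℝ) X
  have hrw : NormedSpace.exp X = ∑' k : ℕ, ((k.factorial : ℝ))⁻¹ • X ^ k := by
    rw [NormedSpace.exp_eq_tsum (𝕂 := ℝ)]
  rw [hrw]
  let Φc : Matrix (Conf d n) (Conf d n) ℝ →L[ℝ] ℝ := LinearMap.toContinuousLinearMap Φ
  have := Φc.map_tsum hsum
  have hΦ : ∀ Y, Φc Y = Φ Y := fun _ => rfl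
  rw [show Φ (∑' k : ℕ, ((k.factorial : ℝ))⁻¹ • X ^ k)
      = Φc (∑' k : ℕ, ((k.factorial : ℝ))⁻¹ • X ^ k) from rfl, this]
  apply tsum_congr
  intro k
  rw [map_smul, smul_eq_mul, hΦ]

lemma exp_lin_summable (Φ : Matrix (Conf d n) (Conf d n) ℝ →ₗ[ℝ] ℝ)
    (X : Matrix (Conf d n) (Conf d n) ℝ) :
    Summable fun k : ℕ => ((k.factorial : ℝ))⁻¹ * Φ (X ^ k) := by
  letI : SeminormedRing (Matrix (Conf d n) (Conf d n) ℝ) := Matrix.linftyOpSemiNormedRing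
  letI : NormedRing (Matrix (Conf d n) (Conf d n) ℝ) := Matrix.linftyOpNormedRing
  letI : NormedAlgebra ℝ (Matrix (Conf d n) (Conf d n) ℝ) := Matrix.linftyOpNormedAlgebra
  have hsum := NormedSpace.expSeries_summable' (𝕂 := ℝ) X
  let Φc : Matrix (Conf d n) (Conf d n) ℝ →L[ℝ] ℝ := LinearMap.toContinuousLinearMap Φ
  have h := hsum.map Φc.toLinearMap.toAddMonoidHom Φc.continuous
  convert h using 2 with k
  simp [Φc]

lemma exp_mulVec_tsum (X : Matrix (Conf d n) (Conf d n) ℝ) (f : Conf d n → ℝ) (x : Conf d n) :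
    (NormedSpace.exp X).mulVec f x
      = ∑' k : ℕ, ((k.factorial : ℝ))⁻¹ * ((X ^ k).mulVec f x) :=
  exp_lin (mvFun f x) X

lemma exp_mulVec_summable (X : Matrix (Conf d n) (Conf d n) ℝ) (f : Conf d n → ℝ)
    (x : Conf d n) :
    Summable fun k : ℕ => ((k.factorial : ℝ))⁻¹ * ((X ^ k).mulVec f x) :=
  exp_lin_summable (mvFun f x) X

lemma exp_entry_tsum (X : Matrix (Conf d n) (Conf d n) ℝ) (x y : Conf d n) :
    (NormedSpace.exp X) x y = ∑' k : ℕ, ((k.factorial : ℝ))⁻¹ * ((X ^ k) x y) :=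
  exp_lin (enFun x y) X

lemma exp_entry_summable (X : Matrix (Conf d n) (Conf d n) ℝ) (x y : Conf d n) :
    Summable fun k : ℕ => ((k.factorial : ℝ))⁻¹ * ((X ^ k) x y) :=
  exp_lin_summable (enFun x y) X

end SSEP
namespace SSEP
set_option synthInstance.maxHeartbeats 1000000
set_option maxHeartbeats 1600000
open Finset

variable {d n : ℕ}

def Smat (ρ β : ℝ) (z' : Site d n) (A : Set (Conf d n)) : Matrix (Conf d n) (Conf d n) ℝ :=
  stopped A (opMatrix (Lbeta ρ β z'))

def Nmat (ρ β : ℝ) (z' : Site d n) (A : Set (Conf d n)) : Matrix (Conf d n) (Conf d n) ℝ :=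
  Smat ρ β z' A + cbd ρ β z' • 1

lemma Nmat_mulVec (ρ β : ℝ) (z' : Site d n) (A : Set (Conf d n)) (f : Conf d n → ℝ)
    (x : Conf d n) :
    (Nmat ρ β z' A).mulVec f x
      = (if x ∈ A then 0 else Lbeta ρ β z' f x) + cbd ρ β z' * f x := by
  unfold Nmat Smat
  rw [Matrix.add_mulVec]
  simp only [Pi.add_apply]
  rw [stopped_mulVec, opMatrix_mulVec]
  congr 1
  rw [Matrix.smul_mulVec, Matrix.one_mulVec]
  simp

section core2
variable {ρ β : ℝ} {z' : Site d n} {A : Set (Conf d n)}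
  (hρ : ρ ∈ Set.Ioo (0:ℝ) 1) (hβ : 0 < β) (hz' : Nbr (0 : Fin d → ℤ) z'.1)
  (hA_upper : ∀ η ζ : Conf d n, η ∈ A → η ≤ ζ → ζ ∈ A)

include hρ hβ hz' hA_upper

lemma pow_InC {f : Conf d n → ℝ} (hf : InC A f) (k : ℕ) :
    InC A (((Nmat ρ β z' A) ^ k).mulVec f) := by
  induction k with
  | zero =>
    have h0 : ((Nmat ρ β z' A) ^ 0).mulVec f = f := by
      rw [pow_zero, Matrix.one_mulVec]
    rwa [h0]
  | succ k ih =>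
    have hstep := cone_step hρ hβ hz' hA_upper ih
    have heq : ((Nmat ρ β z' A) ^ (k+1)).mulVec f
        = fun x => (if x ∈ A then 0
            else Lbeta ρ β z' (((Nmat ρ β z' A) ^ k).mulVec f) x)
          + cbd ρ β z' * ((Nmat ρ β z' A) ^ k).mulVec f x := by
      funext x
      rw [pow_succ', ← Matrix.mulVec_mulVec]
      exact Nmat_mulVec ρ β z' A _ x
    rw [heq]
    exact hstep

omit hρ hβ hz' hA_upper in
lemma exp_decomp (ρ β : ℝ) (z' : Site d n) (A : Set (Conf d n)) (t : ℝ) :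
    NormedSpace.exp (t • Smat ρ β z' A)
      = Real.exp (-(t * cbd ρ β z')) • NormedSpace.exp (t • Nmat ρ β z' A) := by
  letI : SeminormedRing (Matrix (Conf d n) (Conf d n) ℝ) := Matrix.linftyOpSemiNormedRing
  letI : NormedRing (Matrix (Conf d n) (Conf d n) ℝ) := Matrix.linftyOpNormedRing
  letI : NormedAlgebra ℝ (Matrix (Conf d n) (Conf d n) ℝ) := Matrix.linftyOpNormedAlgebra
  have h1 : t • Smat ρ β z' A
      = t • Nmat ρ β z' A + (-(t * cbd ρ β z')) • (1 : Matrix (Conf d n) (Conf d n) ℝ) := by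
    unfold Nmat
    rw [smul_add, smul_smul, add_assoc, ← add_smul]
    simp
  have hcomm : Commute (t • Nmat ρ β z' A)
      ((-(t * cbd ρ β z')) • (1 : Matrix (Conf d n) (Conf d n) ℝ)) :=
    (Commute.one_right (t • Nmat ρ β z' A)).smul_right (-(t * cbd ρ β z'))
  rw [h1, Matrix.exp_add_of_commute _ _ hcomm]
  have h2 : NormedSpace.exp ((-(t * cbd ρ β z')) • (1 : Matrix (Conf d n) (Conf d n) ℝ))
      = Real.exp (-(t * cbd ρ β z')) • (1 : Matrix (Conf d n) (Conf d n) ℝ) := by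
    have ha : ((-(t * cbd ρ β z')) • (1 : Matrix (Conf d n) (Conf d n) ℝ))
        = algebraMap ℝ (Matrix (Conf d n) (Conf d n) ℝ) (-(t * cbd ρ β z')) :=
      (Algebra.algebraMap_eq_smul_one _).symm
    have hb := NormedSpace.algebraMap_exp_comm (𝕂 := ℝ)
      (𝔸 := Matrix (Conf d n) (Conf d n) ℝ) (-(t * cbd ρ β z'))
    rw [ha]; erw [← hb]; rw [← Real.exp_eq_exp_ℝ, Algebra.algebraMap_eq_smul_one]
  rw [h2, Matrix.mul_smul, mul_one]

omit hρ hβ hz' hA_upper in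
lemma exp_Smat_mulVec (ρ β : ℝ) (z' : Site d n) (A : Set (Conf d n)) (t : ℝ)
    (f : Conf d n → ℝ) (x : Conf d n) :
    (NormedSpace.exp (t • Smat ρ β z' A)).mulVec f x
      = Real.exp (-(t * cbd ρ β z'))
        * ∑' k : ℕ, ((k.factorial : ℝ))⁻¹ * (t ^ k * (((Nmat ρ β z' A) ^ k).mulVec f x)) := by
  rw [exp_decomp, Matrix.smul_mulVec]
  simp only [Pi.smul_apply, smul_eq_mul]
  congr 1
  rw [exp_mulVec_tsum]
  apply tsum_congr
  intro k
  congr 1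
  rw [smul_pow, Matrix.smul_mulVec]
  simp

omit hρ hβ hz' hA_upper in
lemma exp_term_summable (ρ β : ℝ) (z' : Site d n) (A : Set (Conf d n)) (t : ℝ)
    (f : Conf d n → ℝ) (x : Conf d n) :
    Summable fun k : ℕ =>
      ((k.factorial : ℝ))⁻¹ * (t ^ k * (((Nmat ρ β z' A) ^ k).mulVec f x)) := by
  have h := exp_mulVec_summable (t • Nmat ρ β z' A) f x
  convert h using 2 with k
  rw [smul_pow, Matrix.smul_mulVec]
  simp

lemma exp_InC (t : ℝ) (ht : 0 ≤ t) {f : Conf d n → ℝ} (hf : InC A f) :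
    InC A (fun x => (NormedSpace.exp (t • Smat ρ β z' A)).mulVec f x) := by
  have hterm := pow_InC hρ hβ hz' hA_upper hf
  have hepos : (0:ℝ) < Real.exp (-(t * cbd ρ β z')) := Real.exp_pos _
  refine ⟨?_, ?_, ?_⟩
  · intro η ζ hle
    simp only
    rw [exp_Smat_mulVec, exp_Smat_mulVec]
    apply mul_le_mul_of_nonneg_left _ hepos.le
    apply Summable.tsum_le_tsum _ (exp_term_summable ρ β z' A t f ζ) (exp_term_summable ρ β z' A t f η)
    intro k
    have h1 : ((Nmat ρ β z' A) ^ k).mulVec f ζ ≤ ((Nmat ρ β z' A) ^ k).mulVec f η :=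
      (hterm k).1 hle
    have h2 : (0:ℝ) ≤ ((k.factorial : ℝ))⁻¹ := by positivity
    have h3 : (0:ℝ) ≤ t ^ k := pow_nonneg ht k
    exact mul_le_mul_of_nonneg_left (mul_le_mul_of_nonneg_left h1 h3) h2
  · intro a ha
    simp only
    rw [exp_Smat_mulVec]
    have : ∀ k : ℕ, ((k.factorial : ℝ))⁻¹ * (t ^ k * (((Nmat ρ β z' A) ^ k).mulVec f a)) = 0 := by
      intro k
      rw [(hterm k).2.1 a ha]
      ring
    rw [tsum_congr this, tsum_zero, mul_zero]
  · intro x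
    simp only
    rw [exp_Smat_mulVec]
    apply mul_nonneg hepos.le
    apply tsum_nonneg
    intro k
    have h1 := (hterm k).2.2 x
    have h2 : (0:ℝ) ≤ ((k.factorial : ℝ))⁻¹ := by positivity
    have h3 : (0:ℝ) ≤ t ^ k := pow_nonneg ht k
    positivity

omit hρ hβ hz' hA_upper in
lemma ind_InC (hA_upper : ∀ η ζ : Conf d n, η ∈ A → η ≤ ζ → ζ ∈ A) :
    InC A (fun ζ : Conf d n => if ζ ∈ A then (0:ℝ) else 1) := by
  refine ⟨?_, ?_, ?_⟩
  · intro η ζ hle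
    simp only
    by_cases hη : η ∈ A
    · rw [if_pos (hA_upper η ζ hη hle), if_pos hη]
    · rw [if_neg hη]
      split_ifs <;> norm_num
  · intro a ha; simp [ha]
  · intro x
    by_cases hx : x ∈ A <;> simp [hx]

end core2
end SSEP
namespace SSEP
set_option synthInstance.maxHeartbeats 1000000
set_option maxHeartbeats 1600000
open Finset

variable {d n : ℕ}

lemma opMatrix_entry (ρ β : ℝ) (z' : Site d n) {η ζ : Conf d n} (hne : η ≠ ζ) :
    opMatrix (Lbeta ρ β z') η ζ
      = (∑ i : Site d n, ∑ j : Site d n,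
          wgt β z' i j * (if exch i j η = ζ then (1:ℝ) else 0))
        + ∑ i : Site d n, brate ρ η i * (if flp i η = ζ then (1:ℝ) else 0) := by
  unfold opMatrix
  simp only [Matrix.of_apply]
  rw [Lbeta_rep]
  simp only [if_neg hne, sub_zero]

lemma db_flip {ρ : ℝ} (hρ : ρ ∈ Set.Ioo (0:ℝ) 1) (i : Site d n) (η : Conf d n) :
    nuRho ρ η * brate ρ η i = nuRho ρ (flp i η) * brate ρ (flp i η) i := by
  have hk := kap_pos hρ
  have hsq := kap_sq hρ
  have hρ0 := hρ.1
  have key : nuRho ρ η * bdRate ρ η i = nuRho ρ (flp i η) * bdRate ρ (flp i η) i := by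
    have h1 : nuRho ρ η
        = (if η i then ρ else 1-ρ) * ∏ k ∈ Finset.univ.erase i, (if η k then ρ else 1-ρ) :=
      (Finset.mul_prod_erase Finset.univ _ (Finset.mem_univ i)).symm
    have h2 : nuRho ρ (flp i η)
        = (if !η i then ρ else 1-ρ) * ∏ k ∈ Finset.univ.erase i, (if η k then ρ else 1-ρ) := by
      rw [show nuRho ρ (flp i η)
          = (if flp i η i then ρ else 1-ρ)
            * ∏ k ∈ Finset.univ.erase i, (if flp i η k then ρ else 1-ρ) from
        (Finset.mul_prod_erase Finset.univ _ (Finset.mem_univ i)).symm]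
      rw [flp_apply_self]
      congr 1
      apply Finset.prod_congr rfl
      intro k hk'
      rw [flp_apply_ne i k η (Finset.mem_erase.1 hk').1]
    have hflpi : flp i η i = !η i := flp_apply_self i η
    have hmul : ρ * kap ρ = (1 - ρ) * (kap ρ)⁻¹ := by
      have h3 : ρ * kap ρ ^ 2 = 1 - ρ := by
        rw [hsq]; field_simp
      field_simp
      nlinarith [h3]
    set P := ∏ k ∈ Finset.univ.erase i, (if η k then ρ else 1-ρ) with hP
    cases hb : η i
    · rw [bdRate_false η i hb]
      have hflpb : flp i η i = true := by rw [hflpi, hb]; rfl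
      rw [bdRate_true _ i hflpb]
      simp only [hb, Bool.not_false, if_true, Bool.false_eq_true, if_false] at h1 h2
      rw [h1, h2]
      linear_combination (-P) * hmul
    · rw [bdRate_true η i hb]
      have hflpb : flp i η i = false := by rw [hflpi, hb]; rfl
      rw [bdRate_false _ i hflpb]
      simp only [hb, Bool.not_true, if_true, Bool.false_eq_true, if_false] at h1 h2
      rw [h1, h2]
      linear_combination P * hmul
  unfold brate
  linear_combination (nOut i : ℝ) * key

lemma nusym {ρ : ℝ} (hρ : ρ ∈ Set.Ioo (0:ℝ) 1) (β : ℝ) (z' : Site d n) (η ζ : Conf d n) :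
    nuRho ρ η * opMatrix (Lbeta ρ β z') η ζ = nuRho ρ ζ * opMatrix (Lbeta ρ β z') ζ η := by
  by_cases hne : η = ζ
  · subst hne; rfl
  rw [opMatrix_entry ρ β z' hne, opMatrix_entry ρ β z' (Ne.symm hne)]
  rw [mul_add, mul_add]
  congr 1
  · rw [Finset.mul_sum, Finset.mul_sum]
    apply Finset.sum_congr rfl; intro i _
    rw [Finset.mul_sum, Finset.mul_sum]
    apply Finset.sum_congr rfl; intro j _
    by_cases hx : exch i j η = ζ
    · have hx' : exch i j ζ = η := by rw [← hx, exch_invol]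
      have hνeq : nuRho ρ ζ = nuRho ρ η := by rw [← hx, nuRho_exch]
      rw [if_pos hx, if_pos hx', hνeq]
    · have hx' : ¬ (exch i j ζ = η) := fun h => hx (by rw [← h, exch_invol])
      rw [if_neg hx, if_neg hx']
      ring
  · rw [Finset.mul_sum, Finset.mul_sum]
    apply Finset.sum_congr rfl; intro i _
    by_cases hx : flp i η = ζ
    · have hx' : flp i ζ = η := by rw [← hx, flp_invol]
      rw [if_pos hx, if_pos hx', mul_one, mul_one]
      rw [← hx]
      exact db_flip hρ i η
    · have hx' : ¬ (flp i ζ = η) := fun h => hx (by rw [← h, flp_invol])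
      rw [if_neg hx, if_neg hx']
      ring

/-- Doubly-stopped matrix: rows and columns in `A` zeroed. -/
def Dmat (ρ β : ℝ) (z' : Site d n) (A : Set (Conf d n)) : Matrix (Conf d n) (Conf d n) ℝ :=
  Matrix.of fun η ζ => if η ∈ A ∨ ζ ∈ A then 0 else opMatrix (Lbeta ρ β z') η ζ

lemma Dmat_sym {ρ : ℝ} (hρ : ρ ∈ Set.Ioo (0:ℝ) 1) (β : ℝ) (z' : Site d n)
    (A : Set (Conf d n)) (η ζ : Conf d n) :
    nuRho ρ η * Dmat ρ β z' A η ζ = nuRho ρ ζ * Dmat ρ β z' A ζ η := by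
  unfold Dmat
  simp only [Matrix.of_apply]
  by_cases h : η ∈ A ∨ ζ ∈ A
  · rw [if_pos h, if_pos (Or.symm h), mul_zero, mul_zero]
  · rw [if_neg h, if_neg (fun hc => h (Or.symm hc))]
    exact nusym hρ β z' η ζ

lemma Dmat_pow_sym {ρ : ℝ} (hρ : ρ ∈ Set.Ioo (0:ℝ) 1) (β : ℝ) (z' : Site d n)
    (A : Set (Conf d n)) (k : ℕ) (η ζ : Conf d n) :
    nuRho ρ η * (Dmat ρ β z' A ^ k) η ζ = nuRho ρ ζ * (Dmat ρ β z' A ^ k) ζ η := by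
  induction k generalizing η ζ with
  | zero =>
    simp only [pow_zero, Matrix.one_apply]
    by_cases h : η = ζ
    · subst h; rfl
    · rw [if_neg h, if_neg (Ne.symm h), mul_zero, mul_zero]
  | succ k ih =>
    have hL : (Dmat ρ β z' A ^ (k+1)) η ζ
        = ∑ x : Conf d n, Dmat ρ β z' A η x * (Dmat ρ β z' A ^ k) x ζ := by
      rw [pow_succ', Matrix.mul_apply]
    have hR : (Dmat ρ β z' A ^ (k+1)) ζ η
        = ∑ x : Conf d n, (Dmat ρ β z' A ^ k) ζ x * Dmat ρ β z' A x η := by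
      rw [pow_succ, Matrix.mul_apply]
    rw [hL, hR, Finset.mul_sum, Finset.mul_sum]
    apply Finset.sum_congr rfl
    intro x _
    have h1 := Dmat_sym hρ β z' A η x
    have h2 := ih x ζ
    calc nuRho ρ η * (Dmat ρ β z' A η x * (Dmat ρ β z' A ^ k) x ζ)
        = (nuRho ρ η * Dmat ρ β z' A η x) * (Dmat ρ β z' A ^ k) x ζ := by ring
      _ = (nuRho ρ x * Dmat ρ β z' A x η) * (Dmat ρ β z' A ^ k) x ζ := by rw [h1]
      _ = (nuRho ρ x * (Dmat ρ β z' A ^ k) x ζ) * Dmat ρ β z' A x η := by ring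
      _ = (nuRho ρ ζ * (Dmat ρ β z' A ^ k) ζ x) * Dmat ρ β z' A x η := by rw [h2]
      _ = nuRho ρ ζ * ((Dmat ρ β z' A ^ k) ζ x * Dmat ρ β z' A x η) := by ring

lemma Dmat_pow_row_A (ρ β : ℝ) (z' : Site d n) (A : Set (Conf d n)) (k : ℕ)
    {η : Conf d n} (hη : η ∈ A) {ζ : Conf d n} (hζ : ζ ∉ A) :
    (Dmat ρ β z' A ^ k) η ζ = 0 := by
  cases k with
  | zero =>
    simp only [pow_zero, Matrix.one_apply]
    rw [if_neg (show η ≠ ζ from fun h => hζ (h ▸ hη))]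
  | succ k =>
    rw [pow_succ', Matrix.mul_apply]
    apply Finset.sum_eq_zero
    intro x _
    unfold Dmat
    simp only [Matrix.of_apply]
    rw [if_pos (Or.inl hη), zero_mul]

lemma Dmat_pow_col_A (ρ β : ℝ) (z' : Site d n) (A : Set (Conf d n)) (k : ℕ)
    {η : Conf d n} (hη : η ∉ A) {ζ : Conf d n} (hζ : ζ ∈ A) :
    (Dmat ρ β z' A ^ k) η ζ = 0 := by
  cases k with
  | zero =>
    simp only [pow_zero, Matrix.one_apply]
    rw [if_neg (show η ≠ ζ from fun h => hη (h.symm ▸ hζ))]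
  | succ k =>
    rw [pow_succ, Matrix.mul_apply]
    apply Finset.sum_eq_zero
    intro x _
    unfold Dmat
    simp only [Matrix.of_apply]
    rw [if_pos (Or.inr hζ), mul_zero]

lemma Smat_pow_row_A (ρ β : ℝ) (z' : Site d n) (A : Set (Conf d n)) (k : ℕ)
    {η : Conf d n} (hη : η ∈ A) (ζ : Conf d n) :
    (Smat ρ β z' A ^ (k+1)) η ζ = 0 := by
  rw [pow_succ', Matrix.mul_apply]
  apply Finset.sum_eq_zero
  intro x _
  unfold Smat stopped
  simp only [Matrix.of_apply]
  rw [if_pos hη, zero_mul]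

lemma pow_entry_eq (ρ β : ℝ) (z' : Site d n) (A : Set (Conf d n)) (k : ℕ)
    (η : Conf d n) {ζ : Conf d n} (hζ : ζ ∉ A) :
    (Smat ρ β z' A ^ k) η ζ = (Dmat ρ β z' A ^ k) η ζ := by
  induction k generalizing η with
  | zero => rfl
  | succ k ih =>
    rw [pow_succ', pow_succ', Matrix.mul_apply, Matrix.mul_apply]
    apply Finset.sum_congr rfl
    intro x _
    rw [ih x]
    by_cases hx : x ∈ A
    · rw [Dmat_pow_row_A ρ β z' A k hx hζ, mul_zero, mul_zero]
    · congr 1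
      unfold Smat stopped Dmat
      simp only [Matrix.of_apply]
      by_cases hη : η ∈ A
      · rw [if_pos hη, if_pos (Or.inl hη)]
      · rw [if_neg hη, if_neg (by tauto)]

end SSEP
namespace SSEP
set_option synthInstance.maxHeartbeats 1000000
set_option maxHeartbeats 1600000
open Finset

variable {d n : ℕ}

lemma exp_S_eq_D (ρ β : ℝ) (z' : Site d n) (A : Set (Conf d n)) (t : ℝ)
    (η : Conf d n) {ζ : Conf d n} (hζ : ζ ∉ A) :
    NormedSpace.exp (t • Smat ρ β z' A) η ζ
      = NormedSpace.exp (t • Dmat ρ β z' A) η ζ := by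
  rw [exp_entry_tsum, exp_entry_tsum]
  apply tsum_congr; intro k
  congr 1
  rw [smul_pow, smul_pow]
  simp only [Matrix.smul_apply, smul_eq_mul]
  rw [pow_entry_eq ρ β z' A k η hζ]

lemma exp_D_sym {ρ : ℝ} (hρ : ρ ∈ Set.Ioo (0:ℝ) 1) (β : ℝ) (z' : Site d n)
    (A : Set (Conf d n)) (t : ℝ) (η ζ : Conf d n) :
    nuRho ρ η * NormedSpace.exp (t • Dmat ρ β z' A) η ζ
      = nuRho ρ ζ * NormedSpace.exp (t • Dmat ρ β z' A) ζ η := by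
  rw [exp_entry_tsum, exp_entry_tsum, ← tsum_mul_left, ← tsum_mul_left]
  apply tsum_congr; intro k
  have hsym := Dmat_pow_sym hρ β z' A k η ζ
  simp only [smul_pow, Matrix.smul_apply, smul_eq_mul]
  linear_combination ((k.factorial : ℝ))⁻¹ * t ^ k * hsym

lemma exp_D_col0 (ρ β : ℝ) (z' : Site d n) (A : Set (Conf d n)) (t : ℝ)
    {η ζ : Conf d n} (hη : η ∉ A) (hζ : ζ ∈ A) :
    NormedSpace.exp (t • Dmat ρ β z' A) η ζ = 0 := by
  rw [exp_entry_tsum]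
  have : ∀ k : ℕ, ((k.factorial : ℝ))⁻¹ * ((t • Dmat ρ β z' A) ^ k) η ζ = 0 := by
    intro k
    rw [smul_pow]
    simp only [Matrix.smul_apply, smul_eq_mul]
    rw [Dmat_pow_col_A ρ β z' A k hη hζ]
    ring
  rw [tsum_congr this, tsum_zero]

lemma exp_S_row_absorb (ρ β : ℝ) (z' : Site d n) (A : Set (Conf d n)) (t : ℝ)
    {ζ : Conf d n} (hζ : ζ ∈ A) (x : Conf d n) :
    NormedSpace.exp (t • Smat ρ β z' A) ζ x = if ζ = x then 1 else 0 := by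
  rw [exp_entry_tsum]
  rw [tsum_eq_single 0]
  · simp [Matrix.one_apply]
  · intro k hk
    obtain ⟨k', rfl⟩ := Nat.exists_eq_succ_of_ne_zero hk
    rw [smul_pow]
    simp only [Matrix.smul_apply, smul_eq_mul]
    rw [Smat_pow_row_A ρ β z' A k' hζ x]
    ring

lemma surv_zero_on_A (ρ β : ℝ) (z' : Site d n) (A : Set (Conf d n)) (t : ℝ)
    {ζ : Conf d n} (hζ : ζ ∈ A) :
    (NormedSpace.exp (t • Smat ρ β z' A)).mulVec
      (fun x => if x ∈ A then (0:ℝ) else 1) ζ = 0 := by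
  unfold Matrix.mulVec dotProduct
  have : ∀ x : Conf d n, NormedSpace.exp (t • Smat ρ β z' A) ζ x
      * (if x ∈ A then (0:ℝ) else 1)
      = (if ζ = x then (1:ℝ) else 0) * (if x ∈ A then (0:ℝ) else 1) := by
    intro x
    rw [exp_S_row_absorb ρ β z' A t hζ x]
  rw [Finset.sum_congr rfl (fun x _ => this x), delta_sum]
  rw [if_pos hζ]

lemma numerator_eq {ρ : ℝ} (hρ : ρ ∈ Set.Ioo (0:ℝ) 1) (β : ℝ) (z' : Site d n)
    (A : Set (Conf d n)) (t : ℝ) (φ : Conf d n → ℝ) :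
    ∑ η : Conf d n, nuRho ρ η * (NormedSpace.exp (t • Smat ρ β z' A)).mulVec
        (fun ζ => if ζ ∈ A then 0 else φ ζ) η
      = ∑ ζ : Conf d n, nuRho ρ ζ * φ ζ
          * ((NormedSpace.exp (t • Smat ρ β z' A)).mulVec
            (fun x => if x ∈ A then (0:ℝ) else 1) ζ) := by
  have hstep1 : ∀ η : Conf d n,
      nuRho ρ η * (NormedSpace.exp (t • Smat ρ β z' A)).mulVec
        (fun ζ => if ζ ∈ A then 0 else φ ζ) η
      = ∑ ζ : Conf d n, (if ζ ∈ A then (0:ℝ)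
          else nuRho ρ ζ * φ ζ * NormedSpace.exp (t • Dmat ρ β z' A) ζ η) := by
    intro η
    unfold Matrix.mulVec dotProduct
    rw [Finset.mul_sum]
    apply Finset.sum_congr rfl
    intro ζ _
    dsimp only
    by_cases hζ : ζ ∈ A
    · rw [if_pos hζ, if_pos hζ, mul_zero, mul_zero]
    · rw [if_neg hζ, if_neg hζ]
      rw [exp_S_eq_D ρ β z' A t η hζ]
      have hsym := exp_D_sym hρ β z' A t η ζ
      linear_combination φ ζ * hsym
  rw [Finset.sum_congr rfl (fun η _ => hstep1 η), Finset.sum_comm]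
  apply Finset.sum_congr rfl
  intro ζ _
  by_cases hζ : ζ ∈ A
  · rw [Finset.sum_congr rfl (fun η _ => if_pos hζ), Finset.sum_const_zero]
    rw [surv_zero_on_A ρ β z' A t hζ, mul_zero]
  · rw [Finset.sum_congr rfl (fun η (_ : η ∈ Finset.univ) => if_neg hζ)]
    unfold Matrix.mulVec dotProduct
    rw [Finset.mul_sum]
    apply Finset.sum_congr rfl
    intro η _
    dsimp only
    by_cases hη : η ∈ A
    · rw [if_pos hη, mul_zero, exp_D_col0 ρ β z' A t hζ hη]
    · rw [if_neg hη, mul_one, exp_S_eq_D ρ β z' A t ζ hη]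

lemma nuRho_pos {ρ : ℝ} (hρ : ρ ∈ Set.Ioo (0:ℝ) 1) (η : Conf d n) : 0 < nuRho ρ η := by
  apply Finset.prod_pos
  intro i _
  split_ifs
  · exact hρ.1
  · linarith [hρ.2]

lemma nuRho_sum_one {ρ : ℝ} (hρ : ρ ∈ Set.Ioo (0:ℝ) 1) :
    ∑ η : Conf d n, nuRho ρ η = 1 := by
  have h := Finset.prod_univ_sum (κ := fun _ : Site d n => Bool)
    (t := fun _ : Site d n => (Finset.univ : Finset Bool))
    (f := fun _ b => if b then ρ else 1 - ρ)
  rw [Fintype.piFinset_univ] at h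
  unfold nuRho
  rw [← h]
  have : ∀ i : Site d n, ∑ b : Bool, (if b then ρ else 1 - ρ) = 1 := by
    intro i
    rw [Fintype.sum_bool]
    simp
  rw [Finset.prod_congr rfl (fun i _ => this i)]
  simp

lemma nuRho_infsup (ρ : ℝ) (η ζ : Conf d n) :
    nuRho ρ (η ⊓ ζ) * nuRho ρ (η ⊔ ζ) = nuRho ρ η * nuRho ρ ζ := by
  unfold nuRho
  rw [← Finset.prod_mul_distrib, ← Finset.prod_mul_distrib]
  apply Finset.prod_congr rfl
  intro i _
  have hinf : (η ⊓ ζ) i = η i ⊓ ζ i := rfl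
  have hsup : (η ⊔ ζ) i = η i ⊔ ζ i := rfl
  rw [hinf, hsup]
  cases hb : η i <;> cases hb2 : ζ i <;> simp [hb, hb2] <;> ring

end SSEP
namespace SSEP
set_option synthInstance.maxHeartbeats 1000000
set_option maxHeartbeats 1600000
open Finset

variable {d n : ℕ}

lemma fkg_apply {ρ : ℝ} (hρ : ρ ∈ Set.Ioo (0:ℝ) 1) (φ s : Conf d n → ℝ)
    (hφ : Monotone φ) (hs : Antitone s) (hs0 : ∀ x, 0 ≤ s x) :
    ∑ η : Conf d n, nuRho ρ η * φ η * s η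
      ≤ (∑ η : Conf d n, nuRho ρ η * φ η) * ∑ η : Conf d n, nuRho ρ η * s η := by
  classical
  set C₁ : ℝ := ∑ x : Conf d n, |φ x| with hC₁
  set C₂ : ℝ := ∑ x : Conf d n, s x with hC₂
  have habs : ∀ x : Conf d n, |φ x| ≤ C₁ := by
    intro x
    exact Finset.single_le_sum (fun y _ => abs_nonneg (φ y)) (Finset.mem_univ x)
  have hsle : ∀ x : Conf d n, s x ≤ C₂ := by
    intro x
    exact Finset.single_le_sum (fun y _ => hs0 y) (Finset.mem_univ x)
  set F : Conf d n → ℝ := fun x => φ x + C₁ with hF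
  set G : Conf d n → ℝ := fun x => C₂ - s x with hG
  have hF0 : (0 : Conf d n → ℝ) ≤ F := by
    intro x
    have := habs x
    have := abs_nonneg (φ x)
    simp only [F, Pi.zero_apply]
    cases abs_cases (φ x) with
    | inl h => linarith [h.1]
    | inr h => linarith [h.1]
  have hG0 : (0 : Conf d n → ℝ) ≤ G := by
    intro x
    simp only [G, Pi.zero_apply]
    linarith [hsle x]
  have hFmono : Monotone F := fun a b hab => by
    simp only [F]; linarith [hφ hab]
  have hGmono : Monotone G := fun a b hab => by
    simp only [G]; linarith [hs hab]
  have hμ0 : (0 : Conf d n → ℝ) ≤ nuRho ρ := fun x => (nuRho_pos hρ x).le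
  have hsm : ∀ a b : Conf d n,
      nuRho ρ a * nuRho ρ b ≤ nuRho ρ (a ⊓ b) * nuRho ρ (a ⊔ b) :=
    fun a b => (nuRho_infsup ρ a b).ge
  have hfkg := fkg F G (nuRho ρ) hμ0 hF0 hG0 hFmono hGmono hsm
  have hone : ∑ a : Conf d n, nuRho ρ a = 1 := nuRho_sum_one hρ
  have e1 : ∑ a : Conf d n, nuRho ρ a * F a
      = (∑ a : Conf d n, nuRho ρ a * φ a) + C₁ := by
    simp only [F, mul_add]
    rw [Finset.sum_add_distrib, ← Finset.sum_mul, hone, one_mul]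
  have e2 : ∑ a : Conf d n, nuRho ρ a * G a
      = C₂ - ∑ a : Conf d n, nuRho ρ a * s a := by
    simp only [G, mul_sub]
    rw [Finset.sum_sub_distrib, ← Finset.sum_mul, hone, one_mul]
  have e3 : ∑ a : Conf d n, nuRho ρ a * (F a * G a)
      = C₂ * (∑ a : Conf d n, nuRho ρ a * φ a)
        - (∑ a : Conf d n, nuRho ρ a * φ a * s a)
        + C₁ * C₂ - C₁ * (∑ a : Conf d n, nuRho ρ a * s a) := by
    have : ∀ a : Conf d n, nuRho ρ a * (F a * G a)
        = C₂ * (nuRho ρ a * φ a) - nuRho ρ a * φ a * s a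
          + C₁ * C₂ * nuRho ρ a - C₁ * (nuRho ρ a * s a) := by
      intro a; simp only [F, G]; ring
    rw [Finset.sum_congr rfl (fun a _ => this a)]
    simp only [Finset.sum_sub_distrib, Finset.sum_add_distrib, ← Finset.mul_sum]
    rw [hone]
    ring
  rw [e1, e2, hone, one_mul, e3] at hfkg
  nlinarith [hfkg]

lemma bot_not_mem {A : Set (Conf d n)}
    (hA_upper : ∀ η ζ : Conf d n, η ∈ A → η ≤ ζ → ζ ∈ A)
    (hA_ne : A ≠ Set.univ) : (fun _ => false : Conf d n) ∉ A := by
  obtain ⟨ξ, hξ⟩ := (Set.ne_univ_iff_exists_notMem A).1 hA_ne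
  intro hbot
  exact hξ (hA_upper _ ξ hbot (fun i => Bool.false_le (ξ i)))

lemma surv_bot_pos {ρ β : ℝ} {z' : Site d n} {A : Set (Conf d n)}
    (hρ : ρ ∈ Set.Ioo (0:ℝ) 1) (hβ : 0 < β) (hz' : Nbr (0 : Fin d → ℤ) z'.1)
    (hA_upper : ∀ η ζ : Conf d n, η ∈ A → η ≤ ζ → ζ ∈ A)
    (hA_ne : A ≠ Set.univ) (t : ℝ) (ht : 0 ≤ t) :
    0 < (NormedSpace.exp (t • Smat ρ β z' A)).mulVec
      (fun x => if x ∈ A then (0:ℝ) else 1) (fun _ => false) := by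
  set ind : Conf d n → ℝ := fun x => if x ∈ A then (0:ℝ) else 1 with hind
  set bot : Conf d n := fun _ => false with hbot
  have hbotA : bot ∉ A := bot_not_mem hA_upper hA_ne
  have hterm := pow_InC hρ hβ hz' hA_upper (ind_InC hA_upper)
  rw [exp_Smat_mulVec]
  apply mul_pos (Real.exp_pos _)
  have hnn : ∀ k : ℕ,
      0 ≤ ((k.factorial : ℝ))⁻¹ * (t ^ k * ((Nmat ρ β z' A ^ k).mulVec ind bot)) := by
    intro k
    have h1 := (hterm k).2.2 bot
    have h2 : (0:ℝ) ≤ ((k.factorial : ℝ))⁻¹ := by positivity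
    have h3 : (0:ℝ) ≤ t ^ k := pow_nonneg ht k
    positivity
  have h0 : ((Nat.factorial 0 : ℝ))⁻¹
      * (t ^ 0 * ((Nmat ρ β z' A ^ 0).mulVec ind bot)) = 1 := by
    rw [pow_zero, pow_zero, Matrix.one_mulVec]
    simp [ind, hbotA]
  calc (0:ℝ) < 1 := one_pos
    _ = _ := h0.symm
    _ ≤ _ := Summable.le_tsum (exp_term_summable ρ β z' A t ind bot) 0 (fun k _ => hnn k)

end SSEP

/-- **Monotonicity of the survival probability (upper bound in Proposition 1.3/1.4).**
For an upper set `A ≠ Ω_n` and any `β > 0`, the survival probability of the process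
generated by `L_β^{n,ρ}` is decreasing in the initial configuration, and consequently
`T_t(ν_ρ) ≼ ν_ρ` for every `t ≥ 0`. -/
theorem survival_decreasing_and_Tt_le_nuRho
    {d n : ℕ} (hd : 1 ≤ d) (hn : 2 ≤ n)
    (ρ : ℝ) (hρ : ρ ∈ Set.Ioo (0 : ℝ) 1)
    (β : ℝ) (hβ : 0 < β)
    (z' : Site d n) (hz' : Nbr (0 : Fin d → ℤ) z'.1)
    (A : Set (Conf d n))
    (hA_upper : ∀ η ζ : Conf d n, η ∈ A → η ≤ ζ → ζ ∈ A)
    (hA_ne : A ≠ Set.univ) :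
    (∀ t : ℝ, 0 ≤ t → ∀ η ζ : Conf d n, η ≤ ζ →
      surv A (opMatrix (Lbeta ρ β z')) t ζ ≤ surv A (opMatrix (Lbeta ρ β z')) t η) ∧
    (∀ t : ℝ, 0 ≤ t → ∀ φ : Conf d n → ℝ, Monotone φ →
      Tt ρ A (opMatrix (Lbeta ρ β z')) t φ ≤ ∑ η, nuRho ρ η * φ η) := by
  have hsurv_def : ∀ t : ℝ, surv A (opMatrix (Lbeta ρ β z')) t
      = fun x => (NormedSpace.exp (t • SSEP.Smat ρ β z' A)).mulVec
        (fun ζ => if ζ ∈ A then (0:ℝ) else 1) x := by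
    intro t; rfl
  have hmain : ∀ t : ℝ, 0 ≤ t → ∀ η ζ : Conf d n, η ≤ ζ →
      surv A (opMatrix (Lbeta ρ β z')) t ζ ≤ surv A (opMatrix (Lbeta ρ β z')) t η := by
    intro t ht η ζ hle
    have h := SSEP.exp_InC hρ hβ hz' hA_upper t ht (SSEP.ind_InC hA_upper)
    rw [hsurv_def t]
    exact h.1 hle
  refine ⟨hmain, ?_⟩
  intro t ht φ hφ
  set s : Conf d n → ℝ := surv A (opMatrix (Lbeta ρ β z')) t with hs_def
  have hInC := SSEP.exp_InC hρ hβ hz' hA_upper t ht (SSEP.ind_InC hA_upper)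
  have hs_anti : Antitone s := by rw [hs_def, hsurv_def t]; exact hInC.1
  have hs_nonneg : ∀ x, 0 ≤ s x := by rw [hs_def, hsurv_def t]; exact hInC.2.2
  have hden_pos : 0 < ∑ η : Conf d n, nuRho ρ η * s η := by
    apply Finset.sum_pos'
    · intro η _
      exact mul_nonneg (SSEP.nuRho_pos hρ η).le (hs_nonneg η)
    · refine ⟨(fun _ => false : Conf d n), Finset.mem_univ _, ?_⟩
      apply mul_pos (SSEP.nuRho_pos hρ _)
      rw [hs_def, hsurv_def t]
      exact SSEP.surv_bot_pos hρ hβ hz' hA_upper hA_ne t ht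
  have hnum : (∑ η : Conf d n, nuRho ρ η *
      (NormedSpace.exp (t • stopped A (opMatrix (Lbeta ρ β z')))).mulVec
        (fun ζ => if ζ ∈ A then 0 else φ ζ) η)
      = ∑ ζ : Conf d n, nuRho ρ ζ * φ ζ * s ζ := by
    have := SSEP.numerator_eq hρ β z' A t φ
    rw [hs_def, hsurv_def t]
    exact this
  have hfkg := SSEP.fkg_apply hρ φ s hφ hs_anti hs_nonneg
  unfold Tt
  rw [hnum]
  rw [div_le_iff₀ hden_pos]
  exact hfkg

end
end

section
/- Assume 2(1 + C·h(k)) ≤ 1 + C for every k ∼ 0. Let A_1 = {η ∈ Ω_n : η(0) = 1} and ψ(η) = (1 − η(0))·Π_{i∈Λ_n\{0}} γ_i^{η(i)}. Then the function V(η) := (L^{n,ρ}ψ)(η)/ψ(η), defined for η with η(0) = 0, is increasing on A_1^c: for all η ≤ ζ in Ω_n with η(0) = ζ(0) = 0, V(η) ≤ V(ζ). -/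
open scoped Classical
noncomputable section

/-- The set of nearest neighbors of `i` in `ℤ^d`, as a finset. -/
def nbrFinset {d : ℕ} (i : Fin d → ℤ) : Finset (Fin d → ℤ) :=
  (Finset.Icc (i - 1) (i + 1)).filter (fun j => Nbr i j)

/-- `γ_i = 1/(1 + C h(i))`. -/
def gam (C : ℝ) {d : ℕ} (h : (Fin d → ℤ) → ℝ) (i : Fin d → ℤ) : ℝ :=
  1 / (1 + C * h i)

/-- `ψ(η) = (1 − η(0)) Π_{i ∈ Λ_n \ {0}} γ_i^{η(i)}`. -/
def psiOne (C : ℝ) {d n : ℕ} (h : (Fin d → ℤ) → ℝ) (η : Conf d n) : ℝ :=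
  (if η (site0 d n) then 0 else 1) *
    ∏ i : Site d n,
      if i = site0 d n then 1 else if η i then gam C h i.1 else 1

section Aux

variable {d n : ℕ}

lemma nbr_symm {i j : Fin d → ℤ} (hij : Nbr i j) : Nbr j i := by
  unfold Nbr at *
  simpa [abs_sub_comm] using hij

lemma nbr_irrefl (i : Fin d → ℤ) : ¬ Nbr i i := by
  simp [Nbr]

lemma exch_symm (i j : Site d n) (η : Conf d n) : exch i j η = exch j i η := by
  funext k
  unfold exch
  by_cases h1 : k = i <;> by_cases h2 : k = j <;> simp_all

lemma exch_self (i j : Site d n) (η : Conf d n) (hij : η i = η j) :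
    exch i j η = η := by
  funext k
  unfold exch
  by_cases h1 : k = i <;> by_cases h2 : k = j <;> simp_all

lemma exch_update (i j k : Site d n) (η : Conf d n) (b : Bool)
    (hki : k ≠ i) (hkj : k ≠ j) :
    exch i j (Function.update η k b) = Function.update (exch i j η) k b := by
  funext m
  unfold exch
  by_cases h1 : m = i <;> by_cases h2 : m = j <;> by_cases h3 : m = k <;>
    simp_all [Function.update_apply, Ne.symm hki, Ne.symm hkj]

lemma exch_eq_update (k j : Site d n) (η : Conf d n) (hkj : k ≠ j) :
    exch k j η = Function.update (Function.update η j (η k)) k (η j) := by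
  funext m
  unfold exch
  by_cases h1 : m = k <;> by_cases h2 : m = j <;>
    simp_all [Function.update_apply]

lemma flp_update (i k : Site d n) (η : Conf d n) (b : Bool) (hki : k ≠ i) :
    flp i (Function.update η k b) = Function.update (flp i η) k b := by
  funext m
  unfold flp
  by_cases h1 : m = i <;> by_cases h3 : m = k <;>
    simp_all [Function.update_apply]

lemma flp_eq_update (k : Site d n) (η : Conf d n) :
    flp k η = Function.update η k (!η k) := by
  funext m
  unfold flp
  by_cases h1 : m = k <;> simp_all [Function.update_apply]

end Aux

section Psi

variable {d n : ℕ} (C : ℝ) (h : (Fin d → ℤ) → ℝ)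

lemma one_add_pos (hC : 0 < C) (hh : ∀ i, 0 ≤ h i) (i : Fin d → ℤ) :
    0 < 1 + C * h i := by nlinarith [hh i]

lemma gam_pos (hC : 0 < C) (hh : ∀ i, 0 ≤ h i) (i : Fin d → ℤ) :
    0 < gam C h i := by
  unfold gam
  exact div_pos one_pos (one_add_pos C h hC hh i)

lemma gam_le_one (hC : 0 < C) (hh : ∀ i, 0 ≤ h i) (i : Fin d → ℤ) :
    gam C h i ≤ 1 := by
  unfold gam
  rw [div_le_one (one_add_pos C h hC hh i)]
  nlinarith [hh i]

lemma psi_pos (hC : 0 < C) (hh : ∀ i, 0 ≤ h i) (η : Conf d n)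
    (hz : η (site0 d n) = false) : 0 < psiOne C h η := by
  unfold psiOne
  rw [hz]
  simp only [Bool.false_eq_true, if_false, one_mul]
  apply Finset.prod_pos
  intro i _
  by_cases h1 : i = site0 d n
  · simp [h1]
  · by_cases h2 : η i
    · simp [h1, h2, gam_pos C h hC hh]
    · simp [h1, h2]

lemma psi_z_true (η : Conf d n) (hz : η (site0 d n) = true) :
    psiOne C h η = 0 := by
  unfold psiOne
  rw [hz]
  simp

lemma psi_update_true (η : Conf d n) (k : Site d n)
    (hk : k ≠ site0 d n) (hηk : η k = false) :
    psiOne C h (Function.update η k true) = gam C h k.1 * psiOne C h η := by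
  unfold psiOne
  have hz : Function.update η k true (site0 d n) = η (site0 d n) :=
    Function.update_of_ne (Ne.symm hk) _ _
  rw [hz]
  rw [← Finset.mul_prod_erase _ _ (Finset.mem_univ k),
    ← Finset.mul_prod_erase _
      (fun i => if i = site0 d n then 1 else if η i then gam C h i.1 else 1)
      (Finset.mem_univ k)]
  have e1 : (if k = site0 d n then (1:ℝ) else
      if Function.update η k true k then gam C h k.1 else 1) = gam C h k.1 := by
    simp [hk]
  have e2 : (if k = site0 d n then (1:ℝ) else if η k then gam C h k.1 else 1) = 1 := by
    simp [hk, hηk]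
  rw [e1, e2]
  have e3 : ∀ i ∈ Finset.univ.erase k,
      (if i = site0 d n then (1:ℝ) else
        if Function.update η k true i then gam C h i.1 else 1) =
      (if i = site0 d n then (1:ℝ) else if η i then gam C h i.1 else 1) := by
    intro i hi
    rw [Function.update_of_ne (Finset.ne_of_mem_erase hi)]
  rw [Finset.prod_congr rfl e3]
  ring

lemma psi_update_false (η : Conf d n) (k : Site d n)
    (hk : k ≠ site0 d n) (hηk : η k = true) :
    gam C h k.1 * psiOne C h (Function.update η k false) = psiOne C h η := by
  have : Function.update (Function.update η k false) k true = η := by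
    funext m
    by_cases hm : m = k <;> simp_all [Function.update_apply]
  calc gam C h k.1 * psiOne C h (Function.update η k false)
      = psiOne C h (Function.update (Function.update η k false) k true) := by
        rw [psi_update_true C h _ k hk (by simp)]
    _ = psiOne C h η := by rw [this]

end Psi

section NbrStruct

variable {d n : ℕ}

lemma nbr_struct {i j : Fin d → ℤ} (hij : Nbr i j) :
    ∃ c : Fin d, (∀ c', c' ≠ c → j c' = i c') ∧ (j c = i c + 1 ∨ j c = i c - 1) := by
  unfold Nbr at hij
  have hex : ∃ c, i c ≠ j c := by
    by_contra hno
    push_neg at hno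
    have : ∑ c, |i c - j c| = 0 := by
      apply Finset.sum_eq_zero
      intro c _
      simp [hno c]
    omega
  obtain ⟨c, hc⟩ := hex
  have h1 : 1 ≤ |i c - j c| := Int.one_le_abs (sub_ne_zero.mpr hc)
  have hsplit : |i c - j c| + ∑ c' ∈ Finset.univ.erase c, |i c' - j c'| = 1 :=
    (Finset.add_sum_erase Finset.univ (fun c => |i c - j c|) (Finset.mem_univ c)).trans hij
  have hrest : ∑ c' ∈ Finset.univ.erase c, |i c' - j c'| = 0 := by
    have hnn : 0 ≤ ∑ c' ∈ Finset.univ.erase c, |i c' - j c'| :=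
      Finset.sum_nonneg fun c' _ => abs_nonneg _
    omega
  have hzero : ∀ c' ∈ Finset.univ.erase c, |i c' - j c'| = 0 := by
    intro c' hc'
    have := (Finset.sum_eq_zero_iff_of_nonneg
      (fun c' _ => abs_nonneg (i c' - j c'))).mp hrest c' hc'
    exact this
  refine ⟨c, ?_, ?_⟩
  · intro c' hne
    have := hzero c' (Finset.mem_erase.mpr ⟨hne, Finset.mem_univ _⟩)
    rw [abs_eq_zero, sub_eq_zero] at this
    omega
  · have habs : |i c - j c| = 1 := by omega
    rcases abs_eq (by norm_num : (0:ℤ) ≤ 1) |>.mp habs with h | h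
    · right; omega
    · left; omega

lemma card_nbr_le (hd : 1 ≤ d) (k : Fin d → ℤ) :
    ((Lam d n).filter fun j => Nbr k j).card ≤ 2 * d := by
  classical
  have hcard : ((Lam d n).filter fun j => Nbr k j).card ≤
      (Finset.univ : Finset (Fin d × Bool)).card := by
    apply Finset.card_le_card_of_injOn
      (fun j => (if hj : ∃ c, j c ≠ k c then hj.choose else ⟨0, by omega⟩,
        decide (∃ c, j c = k c + 1)))
    · intro j _
      exact Finset.mem_univ _
    · intro j1 hm1 j2 hm2 heq
      have hn1 : Nbr k j1 := (Finset.mem_filter.mp hm1).2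
      have hn2 : Nbr k j2 := (Finset.mem_filter.mp hm2).2
      obtain ⟨c1, ho1, hv1⟩ := nbr_struct hn1
      obtain ⟨c2, ho2, hv2⟩ := nbr_struct hn2
      have hex1 : ∃ c, j1 c ≠ k c := ⟨c1, by omega⟩
      have hex2 : ∃ c, j2 c ≠ k c := ⟨c2, by omega⟩
      have hch1 : hex1.choose = c1 := by
        by_contra hne
        exact hex1.choose_spec (ho1 _ hne)
      have hch2 : hex2.choose = c2 := by
        by_contra hne
        exact hex2.choose_spec (ho2 _ hne)
      simp only [hex1, hex2, dif_pos, Prod.mk.injEq] at heq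
      rw [hch1, hch2] at heq
      obtain ⟨hcc, hbb⟩ := heq
      subst hcc
      have hsame : j1 c1 = j2 c1 := by
        have hb : (∃ c, j1 c = k c + 1) ↔ (∃ c, j2 c = k c + 1) := by
          simpa using hbb
        rcases hv1 with h1 | h1 <;> rcases hv2 with h2 | h2
        · omega
        · exfalso
          have he1 : ∃ c, j1 c = k c + 1 := ⟨c1, h1⟩
          obtain ⟨c, hc⟩ := hb.mp he1
          by_cases hcc : c = c1
          · subst hcc; omega
          · have := ho2 c hcc; omega
        · exfalso
          have he2 : ∃ c, j2 c = k c + 1 := ⟨c1, h2⟩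
          obtain ⟨c, hc⟩ := hb.mpr he2
          by_cases hcc : c = c1
          · subst hcc; omega
          · have := ho1 c hcc; omega
        · omega
      funext c
      by_cases hcc : c = c1
      · rw [hcc]; exact hsame
      · rw [ho1 c hcc, ho2 c hcc]
  simpa [Fintype.card_prod, mul_comm] using hcard

lemma nOut_nonneg (hd : 1 ≤ d) (k : Site d n) : (0:ℝ) ≤ (nOut k : ℝ) := by
  have h1 := card_nbr_le (n := n) hd k.1
  have h2 : (0:ℤ) ≤ nOut k := by
    unfold nOut
    omega
  exact_mod_cast h2

end NbrStruct

section NbrSum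

variable {d n : ℕ}

lemma nbr_filter_subset (k : Fin d → ℤ) :
    (Lam d n).filter (fun j => Nbr k j) ⊆ nbrFinset k := by
  intro j hj
  have hnbr : Nbr k j := (Finset.mem_filter.mp hj).2
  have hle : ∀ c, |k c - j c| ≤ 1 := by
    intro c
    calc |k c - j c| ≤ ∑ c', |k c' - j c'| :=
          Finset.single_le_sum (f := fun c' => |k c' - j c'|)
            (fun c' _ => abs_nonneg _) (Finset.mem_univ c)
      _ = 1 := hnbr
  unfold nbrFinset
  rw [Finset.mem_filter, Finset.mem_Icc]
  refine ⟨⟨?_, ?_⟩, hnbr⟩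
  · intro c
    have := hle c
    rw [abs_le] at this
    simp only [Pi.sub_apply, Pi.one_apply]
    omega
  · intro c
    have := hle c
    rw [abs_le] at this
    simp only [Pi.add_apply, Pi.one_apply]
    omega

lemma sum_nbr_site (k : Fin d → ℤ) (F : (Fin d → ℤ) → ℝ) :
    ∑ j : Site d n, (if Nbr k j.1 then F j.1 else 0) =
      ∑ v ∈ (Lam d n).filter (fun j => Nbr k j), F v := by
  rw [Finset.sum_filter]
  exact Finset.sum_coe_sort (Lam d n) (fun v => if Nbr k v then F v else 0)

lemma sum_nbr_h (h : (Fin d → ℤ) → ℝ)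
    (hout : ∀ i ∉ Lam d n, h i = 0)
    (hharm : ∀ i ∈ Lam d n, i ≠ 0 → 2 * (d : ℝ) * h i = ∑ j ∈ nbrFinset i, h j)
    (k : Site d n) (hk0 : k.1 ≠ 0) :
    ∑ j : Site d n, (if Nbr k.1 j.1 then h j.1 else 0) = 2 * (d:ℝ) * h k.1 := by
  rw [sum_nbr_site]
  rw [Finset.sum_subset (nbr_filter_subset k.1)]
  · exact (hharm k.1 k.2 hk0).symm
  · intro x hx hnx
    apply hout
    intro hxLam
    exact hnx (Finset.mem_filter.mpr ⟨hxLam, (Finset.mem_filter.mp hx).2⟩)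

lemma sum_nbr_one (k : Site d n) :
    ∑ j : Site d n, (if Nbr k.1 j.1 then (1:ℝ) else 0) =
      2 * (d:ℝ) - (nOut k : ℝ) := by
  rw [sum_nbr_site k.1 (fun _ => (1:ℝ))]
  rw [Finset.sum_const, nsmul_eq_mul, mul_one]
  have : (nOut k : ℝ) =
      2 * (d:ℝ) - ((Lam d n).filter (fun j => Nbr k.1 j)).card := by
    unfold nOut
    push_cast
    ring
  rw [this]
  ring

end NbrSum

section Gen

variable {d n : ℕ}

lemma kap_pos {ρ : ℝ} (hρ : ρ ∈ Set.Ioo (0:ℝ) 1) : 0 < kap ρ := by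
  unfold kap
  apply Real.sqrt_pos.mpr
  apply div_pos (by linarith [hρ.2]) hρ.1

lemma bdRate_false (ρ : ℝ) (η : Conf d n) (i : Site d n) (hi : η i = false) :
    bdRate ρ η i = (kap ρ)⁻¹ := by
  unfold bdRate
  rw [hi]
  norm_num

lemma bdRate_true (ρ : ℝ) (η : Conf d n) (i : Site d n) (hi : η i = true) :
    bdRate ρ η i = kap ρ := by
  unfold bdRate
  rw [hi]
  norm_num

/-- The bond part of the generator. -/
def Tfun {d n : ℕ} (φ : Conf d n → ℝ) (ξ : Conf d n) (i j : Site d n) : ℝ :=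
  if Nbr i.1 j.1 then φ (exch i j ξ) - φ ξ else 0

/-- The boundary part of the generator. -/
def Bfun {d n : ℕ} (ρ : ℝ) (φ : Conf d n → ℝ) (ξ : Conf d n) (i : Site d n) : ℝ :=
  (nOut i : ℝ) * bdRate ρ ξ i * (φ (flp i ξ) - φ ξ)

lemma Lse_eq (ρ : ℝ) (φ : Conf d n → ℝ) (ξ : Conf d n) :
    Lse ρ φ ξ = (∑ i, ∑ j, Tfun φ ξ i j) / 2 + ∑ i, Bfun ρ φ ξ i := rfl

lemma Tfun_symm (φ : Conf d n → ℝ) (ξ : Conf d n) (i j : Site d n) :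
    Tfun φ ξ i j = Tfun φ ξ j i := by
  unfold Tfun
  by_cases hnbr : Nbr i.1 j.1
  · rw [if_pos hnbr, if_pos (nbr_symm hnbr), exch_symm]
  · rw [if_neg hnbr, if_neg (fun hc => hnbr (nbr_symm hc))]

lemma exch_apply_ne (i j k : Site d n) (η : Conf d n) (hki : k ≠ i) (hkj : k ≠ j) :
    exch i j η k = η k := by
  unfold exch
  simp [hki, hkj]

lemma exch_update_self (k j : Site d n) (η : Conf d n) (b : Bool)
    (hkj : k ≠ j) (hηkj : η k = η j) :
    exch k j (Function.update η k b) = Function.update η j b := by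
  funext m
  unfold exch
  by_cases h1 : m = k <;> by_cases h2 : m = j <;>
    simp_all [Function.update_apply, Ne.symm hkj]

lemma kappa_bracket {κ γ : ℝ} (hκ : 0 < κ) (hγ : 0 < γ) (hγ1 : γ ≤ 1) :
    0 ≤ κ + γ * κ⁻¹ - γ := by
  by_cases hκ1 : κ ≤ 1
  · have : γ ≤ γ * κ⁻¹ := by
      nth_rewrite 1 [← mul_one γ]
      apply mul_le_mul_of_nonneg_left _ hγ.le
      rw [le_inv_comm₀ one_pos hκ]
      simpa using hκ1
    linarith
  · push_neg at hκ1
    have h1 : 0 < γ * κ⁻¹ := by positivity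
    linarith

lemma double_sum_eq {α : Type*} [Fintype α] [DecidableEq α] (D : α → α → ℝ) (k : α)
    (hzero : ∀ i j, i ≠ k → j ≠ k → D i j = 0)
    (hsymm : ∀ i j, D i j = D j i)
    (hkk : D k k = 0) :
    ∑ i, ∑ j, D i j = 2 * ∑ j, D k j := by
  have hsplit : ∑ i, ∑ j, D i j =
      (∑ j, D k j) + ∑ i ∈ Finset.univ.erase k, ∑ j, D i j :=
    (Finset.add_sum_erase Finset.univ (fun i => ∑ j, D i j) (Finset.mem_univ k)).symm
  have hinner : ∀ i ∈ Finset.univ.erase k, ∑ j, D i j = D k i := by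
    intro i hi
    have hik : i ≠ k := Finset.ne_of_mem_erase hi
    rw [Finset.sum_eq_single_of_mem k (Finset.mem_univ k)
      (fun j _ hj => hzero i j hik hj)]
    exact hsymm i k
  rw [hsplit, Finset.sum_congr rfl hinner]
  have : ∑ i ∈ Finset.univ.erase k, D k i = (∑ j, D k j) - D k k :=
    by
      have := Finset.add_sum_erase Finset.univ (fun i => D k i) (Finset.mem_univ k)
      linarith
  rw [this, hkk]
  ring

end Gen


section Increment

set_option maxHeartbeats 2000000 in
lemma increment {d n : ℕ} (hd : 1 ≤ d)
    (ρ : ℝ) (hρ : ρ ∈ Set.Ioo (0 : ℝ) 1)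
    (h : (Fin d → ℤ) → ℝ)
    (h01 : ∀ i, h i ∈ Set.Icc (0 : ℝ) 1)
    (h0 : h 0 = 1)
    (hout : ∀ i ∉ Lam d n, h i = 0)
    (hharm : ∀ i ∈ Lam d n, i ≠ 0 → 2 * (d : ℝ) * h i = ∑ j ∈ nbrFinset i, h j)
    (C : ℝ) (hC : 0 < C)
    (hC2 : ∀ k : Fin d → ℤ, Nbr (0 : Fin d → ℤ) k → 2 * (1 + C * h k) ≤ 1 + C)
    (η : Conf d n) (k : Site d n)
    (hz : η (site0 d n) = false) (hk : k ≠ site0 d n) (hηk : η k = false) :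
    gam C h k.1 * Lse ρ (psiOne C h) η ≤
      Lse ρ (psiOne C h) (Function.update η k true) := by
  have hh : ∀ i, 0 ≤ h i := fun i => (h01 i).1
  have hh1 : ∀ i, h i ≤ 1 := fun i => (h01 i).2
  set ψ := psiOne C h with hψdef
  set z := site0 d n with hzdef
  set ζ := Function.update η k true with hζdef
  set κ := kap ρ with hκdef
  have hκpos : 0 < κ := kap_pos hρ
  have hγpos : ∀ v, 0 < gam C h v := gam_pos C h hC hh
  have hγ1 : ∀ v, gam C h v ≤ 1 := gam_le_one C h hC hh
  have hγmul : ∀ v, gam C h v * (1 + C * h v) = 1 := by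
    intro v
    exact one_div_mul_cancel (ne_of_gt (one_add_pos C h hC hh v))
  have hψη : 0 < ψ η := psi_pos C h hC hh η hz
  have psiZ : ∀ ξ : Conf d n, ξ (site0 d n) = true → ψ ξ = 0 := fun ξ hξ =>
    psi_z_true C h ξ hξ
  have psiUT : ∀ (ξ : Conf d n) (m : Site d n), m ≠ site0 d n → ξ m = false →
      ψ (Function.update ξ m true) = gam C h m.1 * ψ ξ := fun ξ m hm hξ =>
    psi_update_true C h ξ m hm hξ
  have hζz : ζ z = false := by
    rw [hζdef, Function.update_of_ne (Ne.symm hk)]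
    exact hz
  have hζk : ζ k = true := Function.update_self k true η
  have hψζ : ψ ζ = gam C h k.1 * ψ η := psi_update_true C h η k hk hηk
  have hk0 : k.1 ≠ (0 : Fin d → ℤ) := by
    intro hc
    apply hk
    apply Subtype.ext
    rw [hc]
    rfl
  set γk := gam C h k.1 with hγkdef
  -- the difference matrix
  set D : Site d n → Site d n → ℝ :=
    fun i j => Tfun ψ ζ i j - γk * Tfun ψ η i j with hDdef
  -- off-k entries vanish
  have hDzero : ∀ i j, i ≠ k → j ≠ k → D i j = 0 := by
    intro i j hik hjk
    have hik' : k ≠ i := Ne.symm hik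
    have hjk' : k ≠ j := Ne.symm hjk
    simp only [hDdef]
    unfold Tfun
    by_cases hnbr : Nbr i.1 j.1
    · rw [if_pos hnbr, if_pos hnbr]
      have he : exch i j ζ = Function.update (exch i j η) k true :=
        exch_update i j k η true hik' hjk'
      have hek : (exch i j η) k = false := by
        rw [exch_apply_ne i j k η hik' hjk']
        exact hηk
      have : ψ (exch i j ζ) = γk * ψ (exch i j η) := by
        rw [he]
        exact psi_update_true C h (exch i j η) k hk hek
      rw [this, hψζ]
      ring
    · rw [if_neg hnbr, if_neg hnbr]
      ring
  have hDsymm : ∀ i j, D i j = D j i := by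
    intro i j
    simp only [hDdef, Tfun_symm ψ ζ i j, Tfun_symm ψ η i j]
  have hDkk : D k k = 0 := by
    simp only [hDdef]
    unfold Tfun
    rw [if_neg (nbr_irrefl k.1), if_neg (nbr_irrefl k.1)]
    ring
  -- decomposition of the generator difference
  have e1 : ∑ i, ∑ j, Tfun ψ ζ i j =
      γk * (∑ i, ∑ j, Tfun ψ η i j) + 2 * ∑ j, D k j := by
    have hds := double_sum_eq D k hDzero hDsymm hDkk
    have expand : ∑ i, ∑ j, D i j =
        (∑ i, ∑ j, Tfun ψ ζ i j) - γk * ∑ i, ∑ j, Tfun ψ η i j := by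
      simp only [hDdef]
      have hrow : ∀ i : Site d n, ∑ j, (Tfun ψ ζ i j - γk * Tfun ψ η i j) =
          (∑ j, Tfun ψ ζ i j) - γk * ∑ j, Tfun ψ η i j := by
        intro i
        rw [Finset.sum_sub_distrib, Finset.mul_sum]
      rw [Finset.sum_congr rfl fun i _ => hrow i, Finset.sum_sub_distrib,
        Finset.mul_sum]
    linarith
  have hBscale : ∀ i, i ≠ k → Bfun ρ ψ ζ i = γk * Bfun ρ ψ η i := by
    intro i hik
    have hki : k ≠ i := Ne.symm hik
    unfold Bfun
    have hbr : bdRate ρ ζ i = bdRate ρ η i := by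
      unfold bdRate
      rw [hζdef, Function.update_of_ne hik]
    have hfl : ψ (flp i ζ) = γk * ψ (flp i η) := by
      rw [hζdef, flp_update i k η true hki]
      apply psi_update_true C h (flp i η) k hk
      rw [flp_eq_update, Function.update_of_ne hki]
      exact hηk
    rw [hbr, hfl, hψζ]
    ring
  have e2 : ∑ i, Bfun ρ ψ ζ i =
      γk * (∑ i, Bfun ρ ψ η i) + (Bfun ρ ψ ζ k - γk * Bfun ρ ψ η k) := by
    have : ∑ i, (Bfun ρ ψ ζ i - γk * Bfun ρ ψ η i) =
        Bfun ρ ψ ζ k - γk * Bfun ρ ψ η k := by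
      apply Finset.sum_eq_single_of_mem k (Finset.mem_univ k)
      intro i _ hik
      rw [hBscale i hik]
      ring
    have expand : ∑ i, (Bfun ρ ψ ζ i - γk * Bfun ρ ψ η i) =
        (∑ i, Bfun ρ ψ ζ i) - γk * ∑ i, Bfun ρ ψ η i := by
      rw [Finset.sum_sub_distrib, Finset.mul_sum]
    linarith
  rw [Lse_eq, Lse_eq]
  rw [e1, e2]
  -- it remains to bound the k-row of D and the boundary correction at k
  have hsum_bound : 0 ≤ (∑ j, D k j) + (Bfun ρ ψ ζ k - γk * Bfun ρ ψ η k) := by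
    have hz1 : (z : Site d n).1 = (0 : Fin d → ℤ) := rfl
    set W : ℝ := if Nbr k.1 (0 : Fin d → ℤ) then
        (-(γk * ψ η) - ψ η * (γk * γk * C * (h k.1 - 1))) else 0 with hWdef
    set E : Site d n → ℝ := fun j =>
      (if Nbr k.1 j.1 then ψ η * (γk * γk * C * (h k.1 - h j.1)) else 0)
      + (if j = z then W else 0) with hEdef
    -- termwise lower bound on the k-row of D
    have hbound : ∀ j ∈ (Finset.univ : Finset (Site d n)), E j ≤ D k j := by
      intro j _
      by_cases hnbr : Nbr k.1 j.1
      · have hjk : j ≠ k := by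
          intro hc
          rw [hc] at hnbr
          exact nbr_irrefl k.1 hnbr
        have hkj : k ≠ j := Ne.symm hjk
        by_cases hjz : j = z
        · have hηj : η j = false := by rw [hjz]; exact hz
          have hnbr0 : Nbr k.1 (0 : Fin d → ℤ) := by
            rw [← hz1, ← hjz]
            exact hnbr
          have hTη : Tfun ψ η k j = 0 := by
            unfold Tfun
            rw [if_pos hnbr, exch_self k j η (by rw [hηk, hηj]), sub_self]
          have hTζ : Tfun ψ ζ k j = -(ψ ζ) := by
            unfold Tfun
            rw [if_pos hnbr]
            have hex : exch k j ζ = Function.update η j true := by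
              rw [hζdef]
              exact exch_update_self k j η true hkj (by rw [hηk, hηj])
            have hupz : (Function.update η j true) z = true := by
              rw [hjz]
              exact Function.update_self z true η
            rw [hex, psiZ _ hupz]
            ring
          have hDval : D k j = -(γk * ψ η) := by
            simp only [hDdef]
            rw [hTζ, hTη, hψζ]
            ring
          have hEval : E j = -(γk * ψ η) := by
            simp only [hEdef]
            rw [if_pos hnbr, if_pos hjz, hWdef, if_pos hnbr0]
            have hj1 : h j.1 = 1 := by rw [hjz, hz1, h0]
            rw [hj1]
            ring
          rw [hDval, hEval]
        · -- j ≠ z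
          have hEval : E j = ψ η * (γk * γk * C * (h k.1 - h j.1)) := by
            simp only [hEdef]
            rw [if_pos hnbr, if_neg hjz, add_zero]
          rw [hEval]
          have hζj : ζ j = η j := by
            rw [hζdef, Function.update_of_ne hjk]
          by_cases hηj : η j = true
          · -- particle at j jumps to k
            have hTζ : Tfun ψ ζ k j = 0 := by
              unfold Tfun
              rw [if_pos hnbr, exch_self k j ζ (by rw [hζk, hζj, hηj]), sub_self]
            set P : ℝ := ψ (Function.update η j false) with hPdef
            have hPψ : gam C h j.1 * P = ψ η := psi_update_false C h η j hjz hηj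
            have hP : P = (1 + C * h j.1) * ψ η := by
              calc P = (gam C h j.1 * (1 + C * h j.1)) * P := by
                    rw [hγmul j.1]; ring
                _ = (1 + C * h j.1) * (gam C h j.1 * P) := by ring
                _ = (1 + C * h j.1) * ψ η := by rw [hPψ]
            have hTη : Tfun ψ η k j = γk * P - ψ η := by
              unfold Tfun
              rw [if_pos hnbr]
              have hex : exch k j η =
                  Function.update (Function.update η j false) k true := by
                rw [exch_eq_update k j η hkj, hηk, hηj]
              rw [hex, psiUT _ k hk
                (by rw [Function.update_of_ne hkj]; exact hηk)]
            have hDval : D k j = γk * ψ η - γk * (γk * P) := by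
              simp only [hDdef]
              rw [hTζ, hTη]
              ring
            rw [hDval, hP]
            apply le_of_eq
            linear_combination (γk * ψ η) * hγmul k.1
          · -- hole at j, the particle at k can jump there
            have hηj' : η j = false := by
              simpa using hηj
            have hTη : Tfun ψ η k j = 0 := by
              unfold Tfun
              rw [if_pos hnbr, exch_self k j η (by rw [hηk, hηj']), sub_self]
            have hTζ : Tfun ψ ζ k j = gam C h j.1 * ψ η - ψ ζ := by
              unfold Tfun
              rw [if_pos hnbr]
              have hex : exch k j ζ = Function.update η j true := by
                rw [hζdef]
                exact exch_update_self k j η true hkj (by rw [hηk, hηj'])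
              rw [hex, psiUT η j hjz hηj']
            have hDval : D k j = gam C h j.1 * ψ η - γk * ψ η := by
              simp only [hDdef]
              rw [hTζ, hTη, hψζ]
              ring
            rw [hDval]
            have hBpos : 0 < 1 + C * h j.1 := one_add_pos C h hC hh j.1
            have hkey : (gam C h j.1 - 2 * γk + γk ^ 2 * (1 + C * h j.1)) *
                (1 + C * h j.1) = (1 - γk * (1 + C * h j.1)) ^ 2 := by
              linear_combination hγmul j.1
            have h2 : 0 ≤ gam C h j.1 - 2 * γk + γk ^ 2 * (1 + C * h j.1) := by
              nlinarith [hkey, hBpos, sq_nonneg (1 - γk * (1 + C * h j.1))]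
            have h3 : ψ η * γk * (γk * (1 + C * h k.1) - 1) = 0 := by
              rw [hγmul k.1]
              ring
            nlinarith [mul_nonneg hψη.le h2, h3]
      · -- not neighbors
        have hDval : D k j = 0 := by
          simp only [hDdef]
          unfold Tfun
          rw [if_neg hnbr, if_neg hnbr]
          ring
        have hEval : E j = 0 := by
          simp only [hEdef]
          rw [if_neg hnbr, zero_add]
          by_cases hjz : j = z
          · subst hjz
            rw [if_pos rfl, hWdef, if_neg (by rwa [hz1] at hnbr)]
          · rw [if_neg hjz]
        rw [hDval, hEval]
    have hDk : (∑ j, E j) ≤ ∑ j, D k j := Finset.sum_le_sum hbound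
    -- the sum of the lower bounds
    have hEsum : ∑ j, E j =
        -(ψ η * (γk * γk * C) * (nOut k : ℝ) * h k.1) + W := by
      simp only [hEdef]
      rw [Finset.sum_add_distrib]
      have hpc2 : ∑ j : Site d n, (if j = z then W else 0) = W := by
        rw [Finset.sum_ite_eq' Finset.univ z (fun _ => W), if_pos (Finset.mem_univ z)]
      have hsplit : ∀ j : Site d n,
          (if Nbr k.1 j.1 then ψ η * (γk * γk * C * (h k.1 - h j.1)) else 0)
          = (ψ η * (γk * γk * C * h k.1)) * (if Nbr k.1 j.1 then (1:ℝ) else 0)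
            - (ψ η * (γk * γk * C)) * (if Nbr k.1 j.1 then h j.1 else 0) := by
        intro j
        by_cases hnbr : Nbr k.1 j.1 <;> simp [hnbr] <;> ring
      rw [Finset.sum_congr rfl fun j _ => hsplit j, Finset.sum_sub_distrib,
        ← Finset.mul_sum, ← Finset.mul_sum, sum_nbr_one k,
        sum_nbr_h h hout hharm k hk0, hpc2]
      ring
    -- the boundary correction at k
    have hflpη : flp k η = ζ := by
      rw [flp_eq_update, hηk, hζdef]
      rfl
    have hBηk : Bfun ρ ψ η k = (nOut k : ℝ) * κ⁻¹ * (γk * ψ η - ψ η) := by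
      unfold Bfun
      rw [bdRate_false ρ η k hηk, hflpη, hψζ]
    have hflpζ : flp k ζ = η := by
      rw [flp_eq_update, hζk, hζdef]
      funext m
      by_cases hm : m = k
      · subst hm
        simp [Function.update_apply, hηk]
      · simp [Function.update_apply, hm]
    have hBζk : Bfun ρ ψ ζ k = (nOut k : ℝ) * κ * (ψ η - γk * ψ η) := by
      unfold Bfun
      rw [bdRate_true ρ ζ k hζk, hflpζ, hψζ]
    have h1γ' : ψ η - γk * ψ η = γk * (C * h k.1) * ψ η := by
      linear_combination (-(ψ η)) * hγmul k.1
    have hBdiff : Bfun ρ ψ ζ k - γk * Bfun ρ ψ η k =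
        (nOut k : ℝ) * (γk * (C * h k.1)) * ψ η * (κ + γk * κ⁻¹) := by
      rw [hBζk, hBηk]
      have hsub : γk * ψ η - ψ η = -(γk * (C * h k.1) * ψ η) := by
        linear_combination -h1γ'
      rw [h1γ', hsub]
      ring
    -- positivity of the two contributions
    have hnout : (0:ℝ) ≤ (nOut k : ℝ) := nOut_nonneg hd k
    have hbracket : 0 ≤ κ + γk * κ⁻¹ - γk :=
      kappa_bracket hκpos (hγpos k.1) (hγ1 k.1)
    have hX : 0 ≤ (nOut k : ℝ) * γk * C * h k.1 * ψ η * (κ + γk * κ⁻¹ - γk) := by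
      apply mul_nonneg _ hbracket
      apply mul_nonneg _ hψη.le
      apply mul_nonneg _ (hh k.1)
      apply mul_nonneg _ hC.le
      exact mul_nonneg hnout (hγpos k.1).le
    have hW : 0 ≤ W := by
      rw [hWdef]
      by_cases hn0 : Nbr k.1 (0 : Fin d → ℤ)
      · rw [if_pos hn0]
        have hc2 := hC2 k.1 (nbr_symm hn0)
        have h5 : 1 ≤ γk * (C * (1 - h k.1)) := by
          have h6 : 1 + C * h k.1 ≤ C * (1 - h k.1) := by linarith
          calc (1:ℝ) = γk * (1 + C * h k.1) := (hγmul k.1).symm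
            _ ≤ γk * (C * (1 - h k.1)) :=
                mul_le_mul_of_nonneg_left h6 (hγpos k.1).le
        nlinarith [mul_nonneg (mul_nonneg hψη.le (hγpos k.1).le)
          (sub_nonneg.mpr h5)]
      · rw [if_neg hn0]
    linarith [hDk, hEsum, hBdiff, hW, hX]
  linarith

end Increment

set_option maxHeartbeats 1000000 in
/-- **Key step in the proof of Proposition 1.3.**  For `A₁ = {η : η(0) = 1}`, if
`2(1 + C h(k)) ≤ 1 + C` for every `k ∼ 0`, then `V = L^{n,ρ}ψ/ψ` is increasing on
`A₁^c`. -/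
theorem potential_increasing_A1
    {d n : ℕ} (hd : 1 ≤ d) (hn : 2 ≤ n)
    (ρ : ℝ) (hρ : ρ ∈ Set.Ioo (0 : ℝ) 1)
    (h : (Fin d → ℤ) → ℝ)
    (h01 : ∀ i, h i ∈ Set.Icc (0 : ℝ) 1)
    (h0 : h 0 = 1)
    (hout : ∀ i ∉ Lam d n, h i = 0)
    (hharm : ∀ i ∈ Lam d n, i ≠ 0 → 2 * (d : ℝ) * h i = ∑ j ∈ nbrFinset i, h j)
    (C : ℝ) (hC : 0 < C)
    (hC2 : ∀ k : Fin d → ℤ, Nbr (0 : Fin d → ℤ) k → 2 * (1 + C * h k) ≤ 1 + C) :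
    ∀ η ζ : Conf d n, η ≤ ζ →
      η (site0 d n) = false → ζ (site0 d n) = false →
      Lse ρ (psiOne C h) η / psiOne C h η ≤ Lse ρ (psiOne C h) ζ / psiOne C h ζ := by
  intro η₀ ζ₀ hle₀ hηz₀ hζz₀
  have hh : ∀ i, 0 ≤ h i := fun i => (h01 i).1
  suffices H : ∀ N : ℕ, ∀ η ζ : Conf d n,
      (Finset.univ.filter fun i => η i ≠ ζ i).card = N → η ≤ ζ →
      η (site0 d n) = false → ζ (site0 d n) = false →
      Lse ρ (psiOne C h) η / psiOne C h η ≤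
        Lse ρ (psiOne C h) ζ / psiOne C h ζ by
    exact H _ η₀ ζ₀ rfl hle₀ hηz₀ hζz₀
  intro N
  induction N using Nat.strong_induction_on with
  | _ N ih =>
    intro η ζ hcard hle hηz hζz
    by_cases hηζ : η = ζ
    · subst hηζ
      exact le_refl _
    · obtain ⟨k, hk⟩ := Function.ne_iff.mp hηζ
      have hbk : η k = false ∧ ζ k = true := by
        have h1 : η k ≤ ζ k := hle k
        revert h1 hk
        cases η k <;> cases ζ k <;> simp
      have hηk : η k = false := hbk.1
      have hζk : ζ k = true := hbk.2
      have hkz : k ≠ site0 d n := by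
        intro hc
        rw [hc, hζz] at hζk
        exact Bool.false_ne_true hζk
      set η' := Function.update η k true with hη'def
      have hη'z : η' (site0 d n) = false := by
        rw [hη'def, Function.update_of_ne (Ne.symm hkz)]
        exact hηz
      have hη'le : η' ≤ ζ := by
        intro i
        by_cases hik : i = k
        · subst hik
          rw [hη'def, Function.update_self, hζk]
        · rw [hη'def, Function.update_of_ne hik]
          exact hle i
      have hmem : k ∈ Finset.univ.filter (fun i => η i ≠ ζ i) :=
        Finset.mem_filter.mpr ⟨Finset.mem_univ k, hk⟩
      have hset : (Finset.univ.filter fun i => η' i ≠ ζ i)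
          = (Finset.univ.filter fun i => η i ≠ ζ i).erase k := by
        ext i
        simp only [Finset.mem_erase, Finset.mem_filter, Finset.mem_univ, true_and]
        by_cases hik : i = k
        · subst hik
          simp [hη'def, Function.update_self, hζk]
        · simp [hη'def, Function.update_of_ne hik, hik]
      have hcard' : (Finset.univ.filter fun i => η' i ≠ ζ i).card = N - 1 := by
        rw [hset, Finset.card_erase_of_mem hmem, hcard]
      have hNpos : 1 ≤ N := by
        rw [← hcard]
        exact Finset.card_pos.mpr ⟨k, hmem⟩
      have hstep := increment hd ρ hρ h h01 h0 hout hharm C hC hC2 η k hηz hkz hηk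
      have hψη : 0 < psiOne C h η := psi_pos C h hC hh η hηz
      have hψη' : 0 < psiOne C h η' := psi_pos C h hC hh η' hη'z
      have hψeq : psiOne C h η' = gam C h k.1 * psiOne C h η :=
        psi_update_true C h η k hkz hηk
      have hV1 : Lse ρ (psiOne C h) η / psiOne C h η ≤
          Lse ρ (psiOne C h) η' / psiOne C h η' := by
        rw [div_le_div_iff₀ hψη hψη']
        calc Lse ρ (psiOne C h) η * psiOne C h η'
            = (gam C h k.1 * Lse ρ (psiOne C h) η) * psiOne C h η := by
              rw [hψeq]; ring
          _ ≤ Lse ρ (psiOne C h) η' * psiOne C h η :=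
              mul_le_mul_of_nonneg_right hstep hψη.le
      exact le_trans hV1 (ih (N-1) (by omega) η' ζ hcard' hη'le hη'z hζz)
end
end
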